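/- arXiv:0804.2473 — 5 statements merged into one kernel-verified Lean document; each statement's English description precedes it below -/
import Mathlib

section
/- Let N be a K×K positive definite Hermitian complex matrix (K ≥ 1) with Cholesky factorization N = L Lᴴ, where L is lower triangular with strictly positive real diagonal entries, and let λ₁(N) ≥ … ≥ λ_K(N) denote the (real, positive) eigenvalues of N in nonincreasing order. Then the vector l = (ln L₁₁², …, ln L_KK²) is majorized by the vector (ln λ₁(N), …, ln λ_K(N)). -/
open Matrix BigOperators
open scoped ComplexOrder
open Finset Equiv

/-- `a` is majorized by `b` (written `a ≺ b`): after sorting both vectors in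
nonincreasing order, every partial sum of `a` is bounded above by the
corresponding partial sum of `b`, and the total sums agree. -/
def IsMajorizedBy {K : ℕ} (a b : Fin K → ℝ) : Prop :=
  ∃ σ τ : Equiv.Perm (Fin K),
    Antitone (a ∘ σ) ∧ Antitone (b ∘ τ) ∧
    (∀ j : ℕ, j < K →
      ∑ i ∈ Finset.univ.filter (fun i : Fin K => (i : ℕ) ≤ j), a (σ i) ≤
        ∑ i ∈ Finset.univ.filter (fun i : Fin K => (i : ℕ) ≤ j), b (τ i)) ∧
    (∑ i, a i) = (∑ i, b i)


lemma orderEmbOfFin_congr {α : Type*} [LinearOrder α] {s t : Finset α} {m : ℕ} (h : s = t)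
    (hs : s.card = m) (ht : t.card = m) :
    ⇑(s.orderEmbOfFin hs) = ⇑(t.orderEmbOfFin ht) := by subst h; rfl

lemma det_mul_expand {m n : ℕ} (A : Matrix (Fin m) (Fin n) ℂ) (B : Matrix (Fin n) (Fin m) ℂ) :
    det (A * B) = ∑ p : Fin m → Fin n, (∏ i, B (p i) i) * det (A.submatrix id p) := by
  have h1 : det (A * B)
      = ∑ p : Fin m → Fin n, ∑ σ : Equiv.Perm (Fin m),
          ((Equiv.Perm.sign σ : ℤ) : ℂ) * ∏ i, A (σ i) (p i) * B (p i) i := by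
    simp only [det_apply', mul_apply, Finset.prod_univ_sum, Finset.mul_sum, Fintype.piFinset_univ]
    rw [Finset.sum_comm]
  rw [h1]
  refine Finset.sum_congr rfl fun p _ => ?_
  rw [det_apply', Finset.mul_sum]
  refine Finset.sum_congr rfl fun σ _ => ?_
  simp only [submatrix_apply, id]
  rw [Finset.prod_mul_distrib]
  ring

lemma cauchy_binet {m n : ℕ} (A : Matrix (Fin m) (Fin n) ℂ) (B : Matrix (Fin n) (Fin m) ℂ) :
    det (A * B) = ∑ s : {s : Finset (Fin n) // s.card = m},
      det (A.submatrix id (s.1.orderEmbOfFin s.2)) * det (B.submatrix (s.1.orderEmbOfFin s.2) id) := by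
  classical
  rw [det_mul_expand]
  have hzero : ∀ p : Fin m → Fin n, ¬ Function.Injective p →
      (∏ i, B (p i) i) * det (A.submatrix id p) = 0 := by
    intro p hp
    rw [Function.Injective] at hp; push_neg at hp
    obtain ⟨i, j, hij, hne⟩ := hp
    have : det (A.submatrix id p) = 0 :=
      det_zero_of_column_eq hne (fun k => by simp [submatrix_apply, hij])
    rw [this, mul_zero]
  rw [← Finset.sum_filter_of_ne (p := fun p => Function.Injective p)
      (fun p _ h => by_contra fun hc => h (hzero p hc))]
  -- right side reshaping
  have hRHS : ∀ s : {s : Finset (Fin n) // s.card = m},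
      det (A.submatrix id (s.1.orderEmbOfFin s.2)) * det (B.submatrix (s.1.orderEmbOfFin s.2) id)
        = ∑ σ : Equiv.Perm (Fin m),
          ((((Equiv.Perm.sign σ : ℤ) : ℂ)) * ∏ i, B (s.1.orderEmbOfFin s.2 (σ i)) i) *
            det (A.submatrix id (s.1.orderEmbOfFin s.2)) := by
    intro s
    rw [det_apply' (B.submatrix _ id), Finset.mul_sum]
    refine (Finset.sum_congr rfl fun σ _ => ?_)
    simp only [submatrix_apply, id]
    ring
  simp_rw [hRHS]
  rw [← Fintype.sum_prod_type']
  -- now a bijection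
  refine Finset.sum_bij'
    (i := fun p hp => (⟨Finset.image p univ, by
        rw [Finset.card_image_of_injective _ (Finset.mem_filter.mp hp).2, card_univ,
          Fintype.card_fin]⟩,
      Equiv.ofBijective
        (fun i => ((Finset.image p univ).orderIsoOfFin (by
          rw [Finset.card_image_of_injective _ (Finset.mem_filter.mp hp).2, card_univ,
            Fintype.card_fin])).symm ⟨p i, Finset.mem_image_of_mem p (mem_univ i)⟩)
        (Finite.injective_iff_bijective.mp (fun a b hab => (Finset.mem_filter.mp hp).2
          (congrArg Subtype.val (((Finset.image p univ).orderIsoOfFin _).symm.injective hab))))))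
    (j := fun x _ => ⇑(x.1.1.orderEmbOfFin x.1.2) ∘ ⇑x.2)
    (hi := fun p hp => mem_univ _)
    (hj := fun x _ => Finset.mem_filter.mpr ⟨mem_univ _,
      ((x.1.1.orderEmbOfFin x.1.2).injective.comp x.2.injective)⟩)
    (left_neg := ?_) (right_neg := ?_) (h := ?_)
  · -- j (i p) = p
    intro p hp
    funext i
    simp only [Function.comp_apply, Equiv.ofBijective_apply]
    rw [← Finset.coe_orderIsoOfFin_apply, OrderIso.apply_symm_apply]
  · -- i (j x) = x
    intro x hx
    obtain ⟨⟨s, hs⟩, σ⟩ := x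
    have himg : Finset.image (⇑(s.orderEmbOfFin hs) ∘ ⇑σ) univ = s := by
      apply Finset.coe_injective
      rw [Finset.coe_image, Finset.coe_univ, Set.image_univ, Set.range_comp]
      rw [Set.range_eq_univ.mpr σ.surjective, Set.image_univ,
        Finset.range_orderEmbOfFin]
    refine Prod.ext (Subtype.ext himg) ?_
    refine Equiv.ext fun i => ?_
    simp only [Equiv.ofBijective_apply]
    rw [OrderIso.symm_apply_eq, Subtype.ext_iff, Finset.coe_orderIsoOfFin_apply,
      orderEmbOfFin_congr himg _ hs]
    rfl
  · -- values
    intro p hp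
    have key : ∀ (h1 : (Finset.image p univ).card = m) (qq : Equiv.Perm (Fin m))
        (_ : ∀ i, ((Finset.image p univ).orderEmbOfFin h1) (qq i) = p i),
        (∏ i, B (p i) i) * det (A.submatrix id p)
          = (((Equiv.Perm.sign qq : ℤ) : ℂ)
              * ∏ i, B (((Finset.image p univ).orderEmbOfFin h1) (qq i)) i)
            * det (A.submatrix id ⇑((Finset.image p univ).orderEmbOfFin h1)) := by
      intro h1 qq hqq
      have hfun : ⇑((Finset.image p univ).orderEmbOfFin h1) ∘ ⇑qq = p := funext hqq
      have hsub : A.submatrix id (⇑((Finset.image p univ).orderEmbOfFin h1) ∘ ⇑qq)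
          = (A.submatrix id ⇑((Finset.image p univ).orderEmbOfFin h1)).submatrix id ⇑qq := by
        ext i j; simp [Matrix.submatrix_apply]
      have hdet : det (A.submatrix id p) = ((Equiv.Perm.sign qq : ℤ) : ℂ)
          * det (A.submatrix id ⇑((Finset.image p univ).orderEmbOfFin h1)) := by
        conv_lhs => rw [← hfun]
        rw [hsub, Matrix.det_permute']
      simp only [hqq, hdet]
      ring
    refine key _ _ ?_
    intro i
    simp only [Equiv.ofBijective_apply]
    rw [← Finset.coe_orderIsoOfFin_apply, OrderIso.apply_symm_apply]

lemma nat_le_strictMono {K m : ℕ} (f : Fin m → Fin K) (hf : StrictMono f) (i : Fin m) :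
    (i : ℕ) ≤ (f i : ℕ) := by
  have h : ∀ j : ℕ, ∀ hj : j < m, j ≤ (f ⟨j, hj⟩ : ℕ) := by
    intro j
    induction j with
    | zero => intro hj; exact Nat.zero_le _
    | succ k ih =>
      intro hj
      have hk : k < m := Nat.lt_of_succ_lt hj
      have h2 : (f ⟨k, hk⟩ : ℕ) < (f ⟨k + 1, hj⟩ : ℕ) := hf (by simp [Fin.lt_def])
      have := ih hk
      omega
  have := h i.1 i.2
  simpa [Fin.eta] using this

lemma prod_emb {K m : ℕ} {M : Type*} [CommMonoid M] (T : Finset (Fin K)) (hT : T.card = m)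
    (f : Fin K → M) : ∏ i : Fin m, f (T.orderEmbOfFin hT i) = ∏ i ∈ T, f i := by
  have himg : Finset.image (⇑(T.orderEmbOfFin hT)) Finset.univ = T := by
    apply Finset.coe_injective
    rw [Finset.coe_image, Finset.coe_univ, Set.image_univ, Finset.range_orderEmbOfFin]
  conv_rhs => rw [← himg]
  rw [Finset.prod_image (fun a _ b _ h => (T.orderEmbOfFin hT).injective h)]

lemma filter_lt_eq_image {K m : ℕ} (hm : m ≤ K) :
    Finset.univ.filter (fun i : Fin K => (i : ℕ) < m)
      = Finset.image (Fin.castLE hm) Finset.univ := by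
  ext x
  simp only [Finset.mem_filter, Finset.mem_univ, true_and, Finset.mem_image]
  constructor
  · intro hx; exact ⟨⟨x.1, hx⟩, Fin.ext rfl⟩
  · rintro ⟨i, -, rfl⟩; exact i.2

lemma card_filter_lt {K m : ℕ} (hm : m ≤ K) :
    (Finset.univ.filter (fun i : Fin K => (i : ℕ) < m)).card = m := by
  rw [filter_lt_eq_image hm, Finset.card_image_of_injective _ (Fin.castLE_injective hm),
    Finset.card_univ, Fintype.card_fin]

lemma prod_subset_le {K m : ℕ} (lam : Fin K → ℝ) (hpos : ∀ i, 0 < lam i) (hanti : Antitone lam)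
    (hm : m ≤ K) (T : Finset (Fin K)) (hT : T.card = m) :
    ∏ i ∈ T, lam i ≤ ∏ i ∈ Finset.univ.filter (fun i : Fin K => (i : ℕ) < m), lam i := by
  rw [← prod_emb T hT lam, filter_lt_eq_image hm,
    Finset.prod_image (fun a _ b _ h => Fin.castLE_injective hm h)]
  refine Finset.prod_le_prod (fun i _ => le_of_lt (hpos _)) (fun i _ => ?_)
  apply hanti
  rw [Fin.le_def]
  exact nat_le_strictMono _ (T.orderEmbOfFin hT).strictMono i

lemma normSq_term {m K : ℕ} (A : Matrix (Fin m) (Fin K) ℂ) (T : Finset (Fin K)) (hT : T.card = m) :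
    (det (A.submatrix id ⇑(T.orderEmbOfFin hT)) * det (Aᴴ.submatrix ⇑(T.orderEmbOfFin hT) id)).re
      = Complex.normSq (det (A.submatrix id ⇑(T.orderEmbOfFin hT))) := by
  rw [← Matrix.conjTranspose_submatrix, Matrix.det_conjTranspose, Complex.star_def,
    Complex.mul_conj, Complex.ofReal_re]

lemma det_AAH {m K : ℕ} (A : Matrix (Fin m) (Fin K) ℂ) :
    (det (A * Aᴴ)).re = ∑ T : {s : Finset (Fin K) // s.card = m},
      Complex.normSq (det (A.submatrix id ⇑(T.1.orderEmbOfFin T.2))) := by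
  rw [cauchy_binet, Complex.re_sum]
  exact Finset.sum_congr rfl fun T _ => normSq_term A T.1 T.2

lemma normSq_diag {K : ℕ} (L : Matrix (Fin K) (Fin K) ℂ) (hLdiag : ∀ i, (L i i).im = 0)
    (i : Fin K) : Complex.normSq (L i i) = (L i i).re ^ 2 := by
  rw [Complex.normSq_apply, hLdiag i]; ring

lemma stepA {K m : ℕ} (L : Matrix (Fin K) (Fin K) ℂ)
    (hLtri : ∀ i j : Fin K, i < j → L i j = 0)
    (hLdiag : ∀ i, (L i i).im = 0)
    (S : Finset (Fin K)) (hS : S.card = m) :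
    ∏ i ∈ S, ((L i i).re) ^ 2
      ≤ (((L * Lᴴ).submatrix ⇑(S.orderEmbOfFin hS) ⇑(S.orderEmbOfFin hS)).det).re := by
  have hsub : (L * Lᴴ).submatrix ⇑(S.orderEmbOfFin hS) ⇑(S.orderEmbOfFin hS)
      = (L.submatrix ⇑(S.orderEmbOfFin hS) id) * (L.submatrix ⇑(S.orderEmbOfFin hS) id)ᴴ := by
    rw [Matrix.submatrix_mul _ _ _ id _ Function.bijective_id, Matrix.conjTranspose_submatrix]
  rw [hsub, det_AAH]
  refine le_trans ?_ (Finset.single_le_sum (f := fun T : {s : Finset (Fin K) // s.card = m} =>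
      Complex.normSq (det ((L.submatrix ⇑(S.orderEmbOfFin hS) id).submatrix id
        ⇑(T.1.orderEmbOfFin T.2))))
    (fun T _ => Complex.normSq_nonneg _) (Finset.mem_univ (⟨S, hS⟩ : {s : Finset (Fin K) // s.card = m})))
  have h1 : (L.submatrix ⇑(S.orderEmbOfFin hS) id).submatrix id ⇑(S.orderEmbOfFin hS)
      = L.submatrix ⇑(S.orderEmbOfFin hS) ⇑(S.orderEmbOfFin hS) := by
    ext i j; simp
  dsimp only
  rw [h1]
  have h2 : det (L.submatrix ⇑(S.orderEmbOfFin hS) ⇑(S.orderEmbOfFin hS))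
      = ∏ i, L (S.orderEmbOfFin hS i) (S.orderEmbOfFin hS i) := by
    apply Matrix.det_of_lowerTriangular
    intro i j hij
    exact hLtri _ _ ((S.orderEmbOfFin hS).strictMono hij)
  rw [h2, map_prod]
  refine le_of_eq ?_
  rw [← prod_emb S hS (fun k => (L k k).re ^ 2)]
  exact Finset.prod_congr rfl fun i _ => (normSq_diag L hLdiag _).symm

lemma stepB {K m : ℕ} (N : Matrix (Fin K) (Fin K) ℂ) (hN : N.PosDef)
    (S : Finset (Fin K)) (hS : S.card = m) (P : ℝ)
    (hP : ∀ T : Finset (Fin K), T.card = m → ∏ i ∈ T, hN.isHermitian.eigenvalues i ≤ P) :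
    ((N.submatrix ⇑(S.orderEmbOfFin hS) ⇑(S.orderEmbOfFin hS)).det).re ≤ P := by
  set μ : Fin K → ℝ := hN.isHermitian.eigenvalues with hμ
  set U : Matrix (Fin K) (Fin K) ℂ := (hN.isHermitian.eigenvectorUnitary : Matrix (Fin K) (Fin K) ℂ) with hU
  set e : Fin m → Fin K := ⇑(S.orderEmbOfFin hS) with he
  set A : Matrix (Fin m) (Fin K) ℂ := U.submatrix e id with hA
  have hUU : U * star U = 1 := Matrix.mem_unitaryGroup_iff.mp hN.isHermitian.eigenvectorUnitary.2
  have hspec : N = U * (Matrix.diagonal (RCLike.ofReal ∘ μ) * star U) := by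
    rw [← mul_assoc]
    exact hN.isHermitian.spectral_theorem
  have hmain : N.submatrix e e
      = A * ((Matrix.diagonal (RCLike.ofReal ∘ μ) * star U).submatrix id e) := by
    conv_lhs => rw [hspec]
    exact Matrix.submatrix_mul _ _ _ id _ Function.bijective_id
  rw [hmain, cauchy_binet, Complex.re_sum]
  have hre : ∀ (z : ℂ) (c : ℝ), (z * ((c : ℂ) * star z)).re = c * Complex.normSq z := by
    intro z c
    have h : z * ((c : ℂ) * star z) = ((c * Complex.normSq z : ℝ) : ℂ) := by
      rw [Complex.star_def]
      have : z * ((c : ℂ) * (starRingEnd ℂ) z) = (c : ℂ) * (z * (starRingEnd ℂ) z) := by ring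
      rw [this, Complex.mul_conj]
      push_cast
      ring
    rw [h, Complex.ofReal_re]
  have hterm : ∀ T : {s : Finset (Fin K) // s.card = m},
      (det (A.submatrix id ⇑(T.1.orderEmbOfFin T.2)) *
        det (((Matrix.diagonal (RCLike.ofReal ∘ μ) * star U).submatrix id e).submatrix
          ⇑(T.1.orderEmbOfFin T.2) id)).re
      = (∏ i ∈ T.1, μ i) * Complex.normSq (det (A.submatrix id ⇑(T.1.orderEmbOfFin T.2))) := by
    intro T
    have hmat : ((Matrix.diagonal (RCLike.ofReal ∘ μ) * star U).submatrix id e).submatrix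
          ⇑(T.1.orderEmbOfFin T.2) id
        = Matrix.diagonal (fun i => (μ (T.1.orderEmbOfFin T.2 i) : ℂ))
            * (A.submatrix id ⇑(T.1.orderEmbOfFin T.2))ᴴ := by
      ext i j
      simp [Matrix.submatrix_apply, Matrix.diagonal_mul, Matrix.star_apply,
        Matrix.conjTranspose_apply, hA, RCLike.ofReal_alg]
    rw [hmat, det_mul, det_diagonal, Matrix.det_conjTranspose]
    have hc : ∏ i, (μ (T.1.orderEmbOfFin T.2 i) : ℂ) = ((∏ i ∈ T.1, μ i : ℝ) : ℂ) := by
      rw [← prod_emb T.1 T.2 μ]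
      push_cast
      rfl
    rw [hc]
    exact hre _ _
  rw [Finset.sum_congr rfl fun T _ => hterm T]
  have hAA : A * Aᴴ = 1 := by
    have h1 : Aᴴ = (star U).submatrix id e := by
      simp [hA, Matrix.conjTranspose_submatrix, Matrix.star_eq_conjTranspose]
    rw [hA, h1, ← Matrix.submatrix_mul _ _ e id e Function.bijective_id, hUU,
      Matrix.submatrix_one _ (S.orderEmbOfFin hS).injective]
  have hsum1 : ∑ T : {s : Finset (Fin K) // s.card = m},
      Complex.normSq (det (A.submatrix id ⇑(T.1.orderEmbOfFin T.2))) = 1 := by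
    rw [← det_AAH, hAA, det_one, Complex.one_re]
  calc ∑ T : {s : Finset (Fin K) // s.card = m},
        (∏ i ∈ T.1, μ i) * Complex.normSq (det (A.submatrix id ⇑(T.1.orderEmbOfFin T.2)))
      ≤ ∑ T : {s : Finset (Fin K) // s.card = m},
        P * Complex.normSq (det (A.submatrix id ⇑(T.1.orderEmbOfFin T.2))) := by
        refine Finset.sum_le_sum fun T _ => ?_
        exact mul_le_mul_of_nonneg_right (hP T.1 T.2) (Complex.normSq_nonneg _)
    _ = P := by rw [← Finset.mul_sum, hsum1, mul_one]

lemma total_prod {K : ℕ} (N L : Matrix (Fin K) (Fin K) ℂ) (hNpd : N.PosDef)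
    (hLtri : ∀ i j : Fin K, i < j → L i j = 0)
    (hLdiag : ∀ i : Fin K, (L i i).im = 0)
    (hChol : N = L * Lᴴ) :
    ∏ i, ((L i i).re) ^ 2 = ∏ i, hNpd.isHermitian.eigenvalues i := by
  have hdetL : det L = ∏ i, L i i := by
    apply Matrix.det_of_lowerTriangular
    intro i j hij
    exact hLtri _ _ hij
  have h1 : det N = ((∏ i, hNpd.isHermitian.eigenvalues i : ℝ) : ℂ) := by
    rw [hNpd.isHermitian.det_eq_prod_eigenvalues]
    push_cast
    rfl
  have h2 : det N = ((∏ i, ((L i i).re) ^ 2 : ℝ) : ℂ) := by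
    rw [hChol, det_mul, Matrix.det_conjTranspose, hdetL, Complex.star_def, Complex.mul_conj]
    rw [map_prod]
    norm_cast
    exact Finset.prod_congr rfl fun i _ => normSq_diag L hLdiag i
  have := h1.symm.trans h2
  exact_mod_cast this.symm

/-- If `N` is a `K × K` positive definite Hermitian complex
matrix (`K ≥ 1`) with Cholesky factorization `N = L Lᴴ` (`L` lower triangular
with strictly positive real diagonal entries), and `lam` lists the (real,
positive) eigenvalues of `N` in nonincreasing order, then the vector
`l = (ln L₁₁², …, ln L_KK²)` is majorized by `(ln lam 1, …, ln lam K)`. -/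
theorem log_cholesky_diag_isMajorizedBy_log_eigenvalues
    {K : ℕ} (hK : 1 ≤ K) (N L : Matrix (Fin K) (Fin K) ℂ)
    (hNpd : N.PosDef)
    (hLtri : ∀ i j : Fin K, i < j → L i j = 0)
    (hLdiag : ∀ i : Fin K, 0 < (L i i).re ∧ (L i i).im = 0)
    (hChol : N = L * Lᴴ)
    (lam : Fin K → ℝ) (hlam_anti : Antitone lam)
    (hlam : ∃ σ : Equiv.Perm (Fin K), lam = hNpd.isHermitian.eigenvalues ∘ σ) :
    IsMajorizedBy (fun k : Fin K => Real.log ((L k k).re ^ 2))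
      (fun k : Fin K => Real.log (lam k)) := by
  classical
  obtain ⟨σe, hσe⟩ := hlam
  have hμpos : ∀ i, 0 < hNpd.isHermitian.eigenvalues i := fun i => hNpd.eigenvalues_pos i
  have hlampos : ∀ i, 0 < lam i := fun i => by rw [hσe]; exact hμpos _
  have hLpos : ∀ i : Fin K, 0 < (L i i).re ^ 2 := fun i => pow_pos (hLdiag i).1 2
  set a : Fin K → ℝ := fun k => Real.log ((L k k).re ^ 2) with ha
  set σ' : Equiv.Perm (Fin K) := Tuple.sort (fun i => -(a i)) with hσ'
  refine ⟨σ', 1, ?_, ?_, ?_, ?_⟩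
  · -- Antitone (a ∘ σ')
    have hm := Tuple.monotone_sort (fun i => -(a i))
    rw [← hσ'] at hm
    intro i j hij
    have h := hm hij
    simp only [Function.comp_apply] at h ⊢
    linarith
  · -- Antitone (log ∘ lam)
    intro i j hij
    simp only [Function.comp_apply, Equiv.Perm.coe_one, id_eq]
    exact Real.log_le_log (hlampos j) (hlam_anti hij)
  · -- partial sums
    intro j hj
    have htK : j + 1 ≤ K := hj
    set F : Finset (Fin K) := Finset.univ.filter (fun i : Fin K => (i : ℕ) ≤ j) with hF
    have hFlt : F = Finset.univ.filter (fun i : Fin K => (i : ℕ) < j + 1) := by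
      simp [hF, Nat.lt_succ_iff]
    set S : Finset (Fin K) := F.image ⇑σ' with hSdef
    have hcardF : F.card = j + 1 := by rw [hFlt]; exact card_filter_lt htK
    have hcardS : S.card = j + 1 := by
      rw [hSdef, Finset.card_image_of_injective _ σ'.injective, hcardF]
    have hLHS : ∑ i ∈ F, a (σ' i) = Real.log (∏ k ∈ S, (L k k).re ^ 2) := by
      rw [hSdef, Finset.prod_image (fun x _ y _ h => σ'.injective h),
        Real.log_prod (fun k _ => ne_of_gt (hLpos _))]
    set P : ℝ := ∏ i ∈ Finset.univ.filter (fun i : Fin K => (i : ℕ) < j + 1), lam i with hPdef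
    have hP : ∀ T : Finset (Fin K), T.card = j + 1 →
        ∏ i ∈ T, hNpd.isHermitian.eigenvalues i ≤ P := by
      intro T hT
      have h1 : ∏ i ∈ T, hNpd.isHermitian.eigenvalues i = ∏ k ∈ T.image ⇑σe.symm, lam k := by
        rw [Finset.prod_image (fun x _ y _ h => σe.symm.injective h)]
        refine Finset.prod_congr rfl fun i _ => ?_
        rw [hσe]; simp
      rw [h1]
      exact prod_subset_le lam hlampos hlam_anti htK _
        (by rw [Finset.card_image_of_injective _ σe.symm.injective, hT])
    have hchain : ∏ k ∈ S, (L k k).re ^ 2 ≤ P := by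
      have h1 := stepA L hLtri (fun i => (hLdiag i).2) S hcardS
      rw [← hChol] at h1
      exact le_trans h1 (stepB N hNpd S hcardS P hP)
    have hRHS : ∑ i ∈ F, Real.log (lam ((1 : Equiv.Perm (Fin K)) i)) = Real.log P := by
      rw [hPdef, ← hFlt, Real.log_prod (fun k _ => ne_of_gt (hlampos _))]
      simp
    calc ∑ i ∈ F, a (σ' i) = Real.log (∏ k ∈ S, (L k k).re ^ 2) := hLHS
      _ ≤ Real.log P :=
          Real.log_le_log (Finset.prod_pos (fun k _ => hLpos k)) hchain
      _ = ∑ i ∈ F, Real.log (lam ((1 : Equiv.Perm (Fin K)) i)) := hRHS.symm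
  · -- total sums
    have h1 : ∑ i, a i = Real.log (∏ i, (L i i).re ^ 2) :=
      (Real.log_prod fun i _ => ne_of_gt (hLpos i)).symm
    have h2 : ∑ i, Real.log (lam i) = Real.log (∏ i, lam i) :=
      (Real.log_prod fun i _ => ne_of_gt (hlampos i)).symm
    rw [h1, h2, total_prod N L hNpd hLtri (fun i => (hLdiag i).2) hChol]
    congr 1
    rw [hσe]
    exact (Equiv.prod_comp σe _).symm
end

section
/- Let N be a K×K positive definite Hermitian complex matrix with Cholesky factorization N = L Lᴴ (L lower triangular with strictly positive real diagonal), let l = (ln L₁₁², …, ln L_KK²), let λ₁(N) ≥ … ≥ λ_K(N) be the eigenvalues of N in nonincreasing order, and let g : ℝ^K → ℝ be Schur-concave. Then g(ln λ₁(N), …, ln λ_K(N)) ≤ g(l). -/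
open Matrix BigOperators
open scoped ComplexOrder

/-- A function `g : ℝ^K → ℝ` is Schur-concave if `a ≺ b` implies `g a ≥ g b`. -/
def SchurConcave {K : ℕ} (g : (Fin K → ℝ) → ℝ) : Prop :=
  ∀ a b : Fin K → ℝ, IsMajorizedBy a b → g b ≤ g a

open Finset

instance decStrictMono {m K : ℕ} : DecidablePred (fun g : Fin m → Fin K => StrictMono g) :=
  fun g => decidable_of_iff (∀ a b : Fin m, a < b → g a < g b)
    ⟨fun h _ _ hab => h _ _ hab, fun h _ _ hab => h hab⟩

private lemma cb_step1 {R : Type*} [CommRing R] {m K : ℕ}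
    (A : Matrix (Fin m) (Fin K) R) (B : Matrix (Fin K) (Fin m) R) :
    (A * B).det = ∑ p : Fin m → Fin K, (∏ i, A i (p i)) * (B.submatrix p id).det := by
  have h : (A * B) = Matrix.of (fun i => ∑ k, A i k • B k) := by
    ext i j
    simp [Matrix.mul_apply]
  calc (A * B).det
      = (Matrix.detRowAlternating :
          (Fin m → R) [⋀^Fin m]→ₗ[R] R).toMultilinearMap (fun i => ∑ k, A i k • B k) := by
        rw [h]; rfl
    _ = ∑ p : Fin m → Fin K, (Matrix.detRowAlternating :
          (Fin m → R) [⋀^Fin m]→ₗ[R] R).toMultilinearMap (fun i => A i (p i) • B (p i)) :=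
        MultilinearMap.map_sum _ _
    _ = ∑ p : Fin m → Fin K, (∏ i, A i (p i)) * (B.submatrix p id).det := by
        refine Finset.sum_congr rfl fun p _ => ?_
        rw [MultilinearMap.map_smul_univ]
        rfl

private lemma cb_step2 {R : Type*} [CommRing R] {m K : ℕ}
    (A : Matrix (Fin m) (Fin K) R) (B : Matrix (Fin K) (Fin m) R) :
    (A * B).det = ∑ p ∈ univ.filter (fun p : Fin m → Fin K => Function.Injective p),
      (∏ i, A i (p i)) * (B.submatrix p id).det := by
  classical
  rw [cb_step1]
  refine (Finset.sum_subset (Finset.filter_subset _ _) fun p _ hp => ?_).symm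
  simp only [mem_filter, mem_univ, true_and] at hp
  rw [Function.not_injective_iff] at hp
  obtain ⟨a, b, hab, hne⟩ := hp
  have : (B.submatrix p id).det = 0 := by
    refine Matrix.det_zero_of_row_eq hne ?_
    funext j
    simp [Matrix.submatrix_apply, hab]
  rw [this, mul_zero]

private noncomputable def monoOf {m K : ℕ} (p : Fin m → Fin K) : Fin m → Fin K :=
  if h : Function.Injective p then
    (Finset.univ.image p).orderEmbOfFin
      (by rw [Finset.card_image_of_injective _ h, card_univ, Fintype.card_fin])
  else p

private lemma card_image_univ {m K : ℕ} {p : Fin m → Fin K} (h : Function.Injective p) :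
    (Finset.univ.image p).card = m := by
  rw [Finset.card_image_of_injective _ h, card_univ, Fintype.card_fin]

private noncomputable def permOf {m K : ℕ} (p : Fin m → Fin K) : Equiv.Perm (Fin m) :=
  if h : Function.Injective p then
    (Equiv.ofBijective
      (fun k => (⟨p k, Finset.mem_image_of_mem p (Finset.mem_univ k)⟩ : (Finset.univ.image p)))
      (by
        refine (Fintype.bijective_iff_injective_and_card _).mpr
          ⟨fun a b hab => h (congrArg Subtype.val hab), ?_⟩
        rw [Fintype.card_coe, card_image_univ h, Fintype.card_fin])).trans
      ((Finset.univ.image p).orderIsoOfFin (card_image_univ h)).toEquiv.symm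
  else 1

private lemma monoOf_strictMono {m K : ℕ} {p : Fin m → Fin K} (h : Function.Injective p) :
    StrictMono (monoOf p) := by
  rw [monoOf, dif_pos h]
  exact (Finset.orderEmbOfFin _ _).strictMono

private lemma monoOf_comp {m K : ℕ} {p : Fin m → Fin K} (h : Function.Injective p) :
    monoOf p ∘ permOf p = p := by
  funext k
  rw [monoOf, permOf, dif_pos h, dif_pos h]
  simp only [Function.comp_apply, Equiv.trans_apply]
  rw [← Finset.coe_orderIsoOfFin_apply _ (card_image_univ h)]
  simp

private lemma monoOf_comp_eq {m K : ℕ} {g : Fin m → Fin K} (hg : StrictMono g)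
    (σ : Equiv.Perm (Fin m)) : monoOf (g ∘ σ) = g := by
  have hinj : Function.Injective (g ∘ σ) := hg.injective.comp σ.injective
  rw [monoOf, dif_pos hinj]
  have himg : Finset.univ.image (g ∘ σ) = Finset.univ.image g := by
    rw [← Finset.image_image (g := g) (f := σ)]
    congr 1
    exact Finset.image_univ_equiv σ
  have := Finset.orderEmbOfFin_unique
    (s := Finset.univ.image (g ∘ σ)) (card_image_univ hinj) (f := g)
    (fun x => by rw [himg]; exact Finset.mem_image_of_mem g (Finset.mem_univ x)) hg
  exact this.symm

private lemma permOf_comp_eq {m K : ℕ} {g : Fin m → Fin K} (hg : StrictMono g)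
    (σ : Equiv.Perm (Fin m)) : permOf (g ∘ σ) = σ := by
  have hinj : Function.Injective (g ∘ σ) := hg.injective.comp σ.injective
  apply Equiv.ext; intro k
  have h1 : monoOf (g ∘ σ) (permOf (g ∘ σ) k) = g (σ k) := congrFun (monoOf_comp hinj) k
  rw [monoOf_comp_eq hg σ] at h1
  exact hg.injective h1

private lemma cb_group {R : Type*} [AddCommMonoid R] {m K : ℕ} (F : (Fin m → Fin K) → R) :
    ∑ p ∈ univ.filter (fun p : Fin m → Fin K => Function.Injective p), F p
      = ∑ g ∈ univ.filter (fun g : Fin m → Fin K => StrictMono g),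
          ∑ σ : Equiv.Perm (Fin m), F (g ∘ σ) := by
  classical
  have : ∑ g ∈ univ.filter (fun g : Fin m → Fin K => StrictMono g),
          ∑ σ : Equiv.Perm (Fin m), F (g ∘ σ)
      = ∑ x ∈ (univ.filter (fun g : Fin m → Fin K => StrictMono g)) ×ˢ
          (univ : Finset (Equiv.Perm (Fin m))), F (x.1 ∘ x.2) := by
    rw [Finset.sum_product]
  rw [this]
  refine Finset.sum_bij' (fun p _ => (monoOf p, permOf p)) (fun x _ => x.1 ∘ x.2) ?_ ?_ ?_ ?_ ?_
  · intro p hp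
    simp only [mem_filter, mem_univ, true_and] at hp ⊢
    rw [Finset.mem_product]
    exact ⟨by simp [monoOf_strictMono hp], Finset.mem_univ _⟩
  · intro x hx
    rw [Finset.mem_product] at hx
    simp only [mem_filter, mem_univ, true_and] at hx ⊢
    exact hx.1.injective.comp x.2.injective
  · intro p hp
    simp only [mem_filter, mem_univ, true_and] at hp
    exact monoOf_comp hp
  · intro x hx
    rw [Finset.mem_product] at hx
    simp only [mem_filter, mem_univ, true_and] at hx
    exact Prod.ext (monoOf_comp_eq hx.1 x.2) (permOf_comp_eq hx.1 x.2)
  · intro p hp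
    simp only [mem_filter, mem_univ, true_and] at hp
    rw [monoOf_comp hp]

private lemma cb_inner {R : Type*} [CommRing R] {m K : ℕ}
    (A : Matrix (Fin m) (Fin K) R) (B : Matrix (Fin K) (Fin m) R) (g : Fin m → Fin K) :
    ∑ σ : Equiv.Perm (Fin m), (∏ i, A i ((g ∘ σ) i)) * (B.submatrix (g ∘ σ) id).det
      = (A.submatrix id g).det * (B.submatrix g id).det := by
  have h1 : ∀ σ : Equiv.Perm (Fin m),
      (B.submatrix (g ∘ σ) id).det
        = ((Equiv.Perm.sign σ : ℤ) : R) * (B.submatrix g id).det := by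
    intro σ
    have : B.submatrix (g ∘ σ) id = (B.submatrix g id).submatrix σ id := rfl
    rw [this, Matrix.det_permute]
  calc ∑ σ : Equiv.Perm (Fin m), (∏ i, A i ((g ∘ σ) i)) * (B.submatrix (g ∘ σ) id).det
      = ∑ σ : Equiv.Perm (Fin m),
          (((Equiv.Perm.sign σ : ℤ) : R) * ∏ i, (A.submatrix id g) (σ i) i)
            * (B.submatrix g id).det := by
        refine Fintype.sum_equiv (Equiv.inv (Equiv.Perm (Fin m))) _ _ fun σ => ?_
        simp only [Equiv.inv_apply]
        rw [h1]
        have h2 : ∏ i, A i ((g ∘ σ) i) = ∏ i, (A.submatrix id g) (σ⁻¹ i) i := by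
          refine Fintype.prod_equiv σ _ _ fun i => ?_
          simp [Matrix.submatrix_apply]
        rw [h2, Equiv.Perm.sign_inv]
        ring
    _ = (A.submatrix id g).det * (B.submatrix g id).det := by
        rw [← Finset.sum_mul]
        congr 1
        rw [Matrix.det_apply']

private lemma cauchyBinet {R : Type*} [CommRing R] {m K : ℕ}
    (A : Matrix (Fin m) (Fin K) R) (B : Matrix (Fin K) (Fin m) R) :
    (A * B).det = ∑ g ∈ univ.filter (fun g : Fin m → Fin K => StrictMono g),
      (A.submatrix id g).det * (B.submatrix g id).det := by
  rw [cb_step2, cb_group (fun p => (∏ i, A i (p i)) * (B.submatrix p id).det)]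
  refine Finset.sum_congr rfl fun g _ => ?_
  exact cb_inner A B g

private lemma cb_sq {m K : ℕ} (X : Matrix (Fin m) (Fin K) ℂ) :
    (X * Xᴴ).det = ((∑ g ∈ univ.filter (fun g : Fin m → Fin K => StrictMono g),
        Complex.normSq ((X.submatrix id g).det) : ℝ) : ℂ) := by
  rw [cauchyBinet]
  push_cast
  refine Finset.sum_congr rfl fun g _ => ?_
  rw [show Xᴴ.submatrix g id = (X.submatrix id g)ᴴ from (Matrix.conjTranspose_submatrix X id g).symm,
    Matrix.det_conjTranspose]
  rw [show star (X.submatrix id g).det = (starRingEnd ℂ) (X.submatrix id g).det from rfl,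
    Complex.mul_conj]

private lemma image_castLE {K j : ℕ} (hj : j < K) :
    Finset.univ.image (Fin.castLE hj) = univ.filter (fun i : Fin K => (i : ℕ) ≤ j) := by
  ext i
  simp only [mem_image, mem_univ, true_and, mem_filter]
  constructor
  · rintro ⟨k, rfl⟩
    exact Nat.lt_succ_iff.mp k.isLt
  · intro h
    exact ⟨⟨(i : ℕ), Nat.lt_succ_of_le h⟩, rfl⟩

private lemma prod_filter_castLE {K j : ℕ} (hj : j < K) (f : Fin K → ℝ) :
    ∏ i ∈ univ.filter (fun i : Fin K => (i : ℕ) ≤ j), f i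
      = ∏ k : Fin (j + 1), f (Fin.castLE hj k) := by
  rw [← image_castLE hj, Finset.prod_image (fun a _ b _ hab => Fin.castLE_injective hj hab)]

private lemma prod_orderEmbOfFin' {M : Type*} [CommMonoid M] {K m : ℕ}
    (s : Finset (Fin K)) (h : s.card = m) (f : Fin K → M) :
    ∏ i ∈ s, f i = ∏ k : Fin m, f (s.orderEmbOfFin h k) := by
  rw [← Finset.prod_image (fun a _ b _ hab => (s.orderEmbOfFin h).injective hab)]
  congr 1
  ext i
  simp only [mem_image, mem_univ, true_and]
  rw [← Finset.mem_coe, ← Finset.range_orderEmbOfFin s h, Set.mem_range]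

private lemma strictMono_le_apply {m K : ℕ} {v : Fin m → Fin K} (hv : StrictMono v)
    (k : Fin m) : (k : ℕ) ≤ (v k : ℕ) := by
  have H : ∀ n : ℕ, ∀ h : n < m, n ≤ (v ⟨n, h⟩ : ℕ) := by
    intro n
    induction n with
    | zero => intro h; exact Nat.zero_le _
    | succ n ih =>
      intro h
      have hn : n < m := Nat.lt_of_succ_lt h
      have h1 := ih hn
      have h2 : v ⟨n, hn⟩ < v ⟨n + 1, h⟩ := hv (by simp [Fin.lt_def])
      rw [Fin.lt_def] at h2
      omega
  have := H (k : ℕ) k.isLt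
  simpa using this

private lemma prod_lam_le {K m : ℕ} (hm : m ≤ K) {lam : Fin K → ℝ}
    (hpos : ∀ i, 0 < lam i) (hanti : Antitone lam) {u : Fin m → Fin K}
    (hu : Function.Injective u) :
    ∏ k, lam (u k) ≤ ∏ k : Fin m, lam (Fin.castLE hm k) := by
  have hcard : (Finset.univ.image u).card = m := card_image_univ hu
  have h1 : ∏ k, lam (u k) = ∏ k : Fin m, lam ((Finset.univ.image u).orderEmbOfFin hcard k) := by
    rw [← prod_orderEmbOfFin' _ hcard lam, Finset.prod_image (fun a _ b _ hab => hu hab)]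
  rw [h1]
  refine Finset.prod_le_prod (fun k _ => (hpos _).le) fun k _ => ?_
  refine hanti ?_
  rw [Fin.le_def]
  simpa using strictMono_le_apply ((Finset.univ.image u).orderEmbOfFin hcard).strictMono k

private lemma det_submatrix_triangular {K m : ℕ} (L : Matrix (Fin K) (Fin K) ℂ)
    (hLtri : ∀ i j : Fin K, i < j → L i j = 0) {e : Fin m → Fin K} (he : StrictMono e) :
    (L.submatrix e e).det = ∏ k, L (e k) (e k) := by
  rw [Matrix.det_of_lowerTriangular]
  · rfl
  · intro i j hij
    exact hLtri _ _ (he hij)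

private lemma key_ineq {K m : ℕ} (hm : m ≤ K)
    (N L U : Matrix (Fin K) (Fin K) ℂ) (E lam : Fin K → ℝ)
    (hChol : N = L * Lᴴ)
    (hLtri : ∀ i j : Fin K, i < j → L i j = 0)
    (hLdiag : ∀ i : Fin K, (L i i).im = 0)
    (hspec : N = U * Matrix.diagonal (fun i => (E i : ℂ)) * Uᴴ)
    (hU : U * Uᴴ = 1)
    (hEpos : ∀ i, 0 < E i)
    (σ₀ : Equiv.Perm (Fin K)) (hσ₀ : lam = E ∘ σ₀) (hanti : Antitone lam)
    {e : Fin m → Fin K} (he : StrictMono e) :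
    ∏ k, (L (e k) (e k)).re ^ 2 ≤ ∏ k : Fin m, lam (Fin.castLE hm k) := by
  set SM := univ.filter (fun g : Fin m → Fin K => StrictMono g) with hSM
  set X : Matrix (Fin m) (Fin K) ℂ := L.submatrix e id with hXdef
  set B0 : Matrix (Fin m) (Fin K) ℂ := U.submatrix e id with hB0def
  set Y : Matrix (Fin m) (Fin K) ℂ :=
    B0 * Matrix.diagonal (fun i => (Real.sqrt (E i) : ℂ)) with hYdef
  set P : ℝ := ∏ k : Fin m, lam (Fin.castLE hm k) with hP
  -- X * Xᴴ is the principal submatrix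
  have hX : X * Xᴴ = N.submatrix e e := by
    rw [hChol]
    ext i j
    simp [Matrix.mul_apply, Matrix.conjTranspose_apply, Matrix.submatrix_apply, hXdef]
  -- Y * Yᴴ is the same principal submatrix
  have hYentry : ∀ i k, Y i k = U (e i) k * (Real.sqrt (E k) : ℂ) := by
    intro i k
    simp [hYdef, Matrix.mul_apply, Matrix.diagonal_apply, hB0def, Matrix.submatrix_apply,
      Finset.sum_ite_eq, mul_ite, mul_zero]
  have hY : Y * Yᴴ = N.submatrix e e := by
    rw [hspec]
    ext i j
    simp only [Matrix.mul_apply, Matrix.conjTranspose_apply, Matrix.submatrix_apply, hYentry,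
      Matrix.diagonal_apply, Finset.sum_ite_eq, Finset.mem_univ, if_true, ite_mul, zero_mul]
    refine Finset.sum_congr rfl fun k _ => ?_
    have hsq : (Real.sqrt (E k) : ℂ) * (Real.sqrt (E k) : ℂ) = (E k : ℂ) := by
      rw [← Complex.ofReal_mul, Real.mul_self_sqrt (hEpos k).le]
    simp only [mul_ite, mul_zero, Finset.sum_ite_eq', Finset.mem_univ, if_true, star_mul',
      Complex.star_def, Complex.conj_ofReal]
    rw [← hsq]
    ring
  have h1 : (N.submatrix e e).det
      = ((∑ g ∈ SM, Complex.normSq ((X.submatrix id g).det) : ℝ) : ℂ) := by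
    rw [← hX]; exact cb_sq X
  have h2 : (N.submatrix e e).det
      = ((∑ g ∈ SM, Complex.normSq ((Y.submatrix id g).det) : ℝ) : ℂ) := by
    rw [← hY]; exact cb_sq Y
  have hterm : ∀ g : Fin m → Fin K, Complex.normSq ((Y.submatrix id g).det)
      = Complex.normSq ((B0.submatrix id g).det) * ∏ k, E (g k) := by
    intro g
    have hfac : Y.submatrix id g
        = (B0.submatrix id g) * Matrix.diagonal (fun k : Fin m => (Real.sqrt (E (g k)) : ℂ)) := by
      ext i k
      rw [Matrix.submatrix_apply, hYentry]
      simp [Matrix.mul_apply, Matrix.diagonal_apply, mul_ite, mul_zero,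
        Finset.sum_ite_eq', hB0def, Matrix.submatrix_apply]
    rw [hfac, Matrix.det_mul, Complex.normSq_mul, Matrix.det_diagonal]
    congr 1
    rw [← Complex.ofReal_prod, Complex.normSq_ofReal, ← Finset.prod_mul_distrib]
    exact Finset.prod_congr rfl fun k _ => Real.mul_self_sqrt (hEpos (g k)).le
  have hq1 : ∑ g ∈ SM, Complex.normSq ((B0.submatrix id g).det) = 1 := by
    have hB : B0 * B0ᴴ = 1 := by
      ext i j
      have h' : (B0 * B0ᴴ) i j = (U * Uᴴ) (e i) (e j) := by
        simp [Matrix.mul_apply, Matrix.conjTranspose_apply, hB0def, Matrix.submatrix_apply]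
      rw [h', hU]
      simp [Matrix.one_apply, he.injective.eq_iff]
    have hcb := cb_sq B0
    rw [hB, Matrix.det_one] at hcb
    exact_mod_cast hcb.symm
  have hbound : ∀ g ∈ SM, ∏ k, E (g k) ≤ P := by
    intro g hg
    have hginj : Function.Injective g := ((Finset.mem_filter.mp hg).2).injective
    have hE : ∀ x, E x = lam (σ₀.symm x) := by
      intro x
      rw [hσ₀]
      simp
    have hre : ∏ k, E (g k) = ∏ k, lam ((fun k => σ₀.symm (g k)) k) :=
      Finset.prod_congr rfl fun k _ => hE (g k)
    rw [hre, hP]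
    exact prod_lam_le hm (fun i => by rw [hσ₀]; exact hEpos _) hanti
      (σ₀.symm.injective.comp hginj)
  have hub : ∑ g ∈ SM, Complex.normSq ((Y.submatrix id g).det) ≤ P := by
    calc ∑ g ∈ SM, Complex.normSq ((Y.submatrix id g).det)
        = ∑ g ∈ SM, Complex.normSq ((B0.submatrix id g).det) * ∏ k, E (g k) :=
          Finset.sum_congr rfl fun g _ => hterm g
      _ ≤ ∑ g ∈ SM, Complex.normSq ((B0.submatrix id g).det) * P :=
          Finset.sum_le_sum fun g hg =>
            mul_le_mul_of_nonneg_left (hbound g hg) (Complex.normSq_nonneg _)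
      _ = P := by rw [← Finset.sum_mul, hq1, one_mul]
  have hlb : ∏ k, (L (e k) (e k)).re ^ 2
      ≤ ∑ g ∈ SM, Complex.normSq ((X.submatrix id g).det) := by
    have hmem : e ∈ SM := Finset.mem_filter.mpr ⟨Finset.mem_univ _, he⟩
    have hXe : (X.submatrix id e) = L.submatrix e e := rfl
    have hval : Complex.normSq ((X.submatrix id e).det) = ∏ k, (L (e k) (e k)).re ^ 2 := by
      rw [hXe, det_submatrix_triangular L hLtri he,
        map_prod Complex.normSq (fun k => L (e k) (e k)) Finset.univ]
      refine Finset.prod_congr rfl fun k _ => ?_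
      rw [Complex.normSq_apply, hLdiag (e k)]
      ring
    rw [← hval]
    exact Finset.single_le_sum (f := fun g => Complex.normSq ((X.submatrix id g).det))
      (fun g _ => Complex.normSq_nonneg _) hmem
  have heq : (∑ g ∈ SM, Complex.normSq ((X.submatrix id g).det))
      = ∑ g ∈ SM, Complex.normSq ((Y.submatrix id g).det) :=
    Complex.ofReal_inj.mp (h1.symm.trans h2)
  calc ∏ k, (L (e k) (e k)).re ^ 2
      ≤ ∑ g ∈ SM, Complex.normSq ((X.submatrix id g).det) := hlb
    _ = ∑ g ∈ SM, Complex.normSq ((Y.submatrix id g).det) := heq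
    _ ≤ P := hub

/-- Let `N = L Lᴴ` be the Cholesky factorization of a `K × K`
positive definite Hermitian complex matrix, `l = (ln L₁₁², …, ln L_KK²)`, let
`lam` list the eigenvalues of `N` in nonincreasing order, and let `g` be
Schur-concave.  Then `g (ln lam₁, …, ln lam_K) ≤ g l`. -/
theorem schurConcave_log_eigenvalues_le
    {K : ℕ} (N L : Matrix (Fin K) (Fin K) ℂ)
    (hNpd : N.PosDef)
    (hLtri : ∀ i j : Fin K, i < j → L i j = 0)
    (hLdiag : ∀ i : Fin K, 0 < (L i i).re ∧ (L i i).im = 0)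
    (hChol : N = L * Lᴴ)
    (lam : Fin K → ℝ) (hlam_anti : Antitone lam)
    (hlam : ∃ σ : Equiv.Perm (Fin K), lam = hNpd.isHermitian.eigenvalues ∘ σ)
    (g : (Fin K → ℝ) → ℝ) (hg : SchurConcave g) :
    g (fun k : Fin K => Real.log (lam k)) ≤
      g (fun k : Fin K => Real.log ((L k k).re ^ 2)) := by
  classical
  obtain ⟨σ₀, hσ₀⟩ := hlam
  have hN := hNpd.isHermitian
  set E : Fin K → ℝ := hN.eigenvalues with hE
  set UU : Matrix (Fin K) (Fin K) ℂ := (hN.eigenvectorUnitary : Matrix (Fin K) (Fin K) ℂ)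
    with hUU
  have hspec : N = UU * Matrix.diagonal (fun i => ((E i : ℝ) : ℂ)) * UUᴴ := by
    convert hN.spectral_theorem using 2
    rw [Unitary.conjStarAlgAut_apply]
    rfl
  have hU : UU * UUᴴ = 1 := Matrix.mem_unitaryGroup_iff.mp (hN.eigenvectorUnitary).2
  have hEpos : ∀ i, 0 < E i := fun i => hNpd.eigenvalues_pos i
  have hlampos : ∀ i, 0 < lam i := by
    intro i
    rw [hσ₀]
    exact hEpos _
  have hLpos : ∀ i, 0 < (L i i).re ^ 2 := fun i => pow_pos (hLdiag i).1 2
  -- total product identity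
  have hdetprod : ∏ i, (L i i).re ^ 2 = ∏ i, lam i := by
    have hLre : ∀ i, L i i = (((L i i).re : ℝ) : ℂ) := by
      intro i
      have := (hLdiag i).2
      apply Complex.ext <;> simp [this]
    have hdetL : L.det = ((∏ i, (L i i).re : ℝ) : ℂ) := by
      rw [Matrix.det_of_lowerTriangular L (fun i j hij => hLtri i j hij)]
      rw [Complex.ofReal_prod]
      exact Finset.prod_congr rfl fun i _ => hLre i
    have hdetN : N.det = ((((∏ i, (L i i).re) ^ 2 : ℝ)) : ℂ) := by
      rw [hChol, Matrix.det_mul, Matrix.det_conjTranspose, hdetL]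
      rw [show star (((∏ i, (L i i).re : ℝ)) : ℂ) = (((∏ i, (L i i).re : ℝ)) : ℂ) from by
        rw [Complex.star_def, Complex.conj_ofReal]]
      push_cast
      ring
    have hdetN' : N.det = ((∏ i, E i : ℝ) : ℂ) := by
      rw [hN.det_eq_prod_eigenvalues]
      push_cast
      rfl
    have h1 : (∏ i, (L i i).re) ^ 2 = ∏ i, E i :=
      Complex.ofReal_inj.mp (hdetN.symm.trans hdetN')
    have h2 : ∏ i, lam i = ∏ i, E i := by
      rw [hσ₀]
      exact Equiv.prod_comp σ₀ E
    calc ∏ i, (L i i).re ^ 2 = (∏ i, (L i i).re) ^ 2 := by rw [Finset.prod_pow]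
      _ = ∏ i, E i := h1
      _ = ∏ i, lam i := h2.symm
  set a : Fin K → ℝ := fun k => Real.log ((L k k).re ^ 2) with ha
  set b : Fin K → ℝ := fun k => Real.log (lam k) with hb
  set σ : Equiv.Perm (Fin K) := Tuple.sort (fun k => -(a k)) with hσdef
  have hAanti : Antitone (a ∘ σ) := by
    have hmono := Tuple.monotone_sort (fun k => -(a k))
    intro x y hxy
    have h := hmono hxy
    simp only [Function.comp_apply, neg_le_neg_iff] at h ⊢
    exact h
  have hBanti : Antitone (b ∘ (1 : Equiv.Perm (Fin K))) := by
    intro x y hxy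
    simp only [Equiv.Perm.coe_one, Function.comp_apply, id_eq, hb]
    exact Real.log_le_log (hlampos y) (hlam_anti hxy)
  refine hg a b ⟨σ, 1, hAanti, hBanti, ?_, ?_⟩
  · intro j hj
    have hm : j + 1 ≤ K := hj
    set F := Finset.univ.filter (fun i : Fin K => (i : ℕ) ≤ j) with hF
    have hsum1 : ∑ i ∈ F, a (σ i) = Real.log (∏ i ∈ F, (L (σ i) (σ i)).re ^ 2) := by
      rw [Real.log_prod (fun i _ => (hLpos (σ i)).ne')]
    have hsum2 : ∑ i ∈ F, b ((1 : Equiv.Perm (Fin K)) i)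
        = Real.log (∏ i ∈ F, lam i) := by
      rw [Real.log_prod (fun i _ => (hlampos i).ne')]
      simp [hb]
    rw [hsum1, hsum2]
    apply Real.log_le_log (Finset.prod_pos fun i _ => hLpos (σ i))
    have hcardF : F.card = j + 1 := by
      rw [hF, ← image_castLE hj,
        Finset.card_image_of_injective _ (Fin.castLE_injective hj), card_univ,
        Fintype.card_fin]
    set s := F.image σ with hs
    have hcards : s.card = j + 1 := by
      rw [hs, Finset.card_image_of_injective _ σ.injective, hcardF]
    have hLHS : ∏ i ∈ F, (L (σ i) (σ i)).re ^ 2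
        = ∏ k : Fin (j + 1),
            (L (s.orderEmbOfFin hcards k) (s.orderEmbOfFin hcards k)).re ^ 2 := by
      rw [← prod_orderEmbOfFin' s hcards (fun i => (L i i).re ^ 2), hs,
        Finset.prod_image (fun x _ y _ h => σ.injective h)]
    have hRHS : ∏ i ∈ F, lam i = ∏ k : Fin (j + 1), lam (Fin.castLE hm k) := by
      rw [hF, prod_filter_castLE hj lam]
    rw [hLHS, hRHS]
    exact key_ineq hm N L UU E lam hChol hLtri (fun i => (hLdiag i).2) hspec hU hEpos
      σ₀ hσ₀ hlam_anti (s.orderEmbOfFin hcards).strictMono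
  · have hA : ∑ i, a i = Real.log (∏ i, (L i i).re ^ 2) :=
      (Real.log_prod fun i _ => (hLpos i).ne').symm
    have hB : ∑ i, b i = Real.log (∏ i, lam i) :=
      (Real.log_prod fun i _ => (hlampos i).ne').symm
    rw [hA, hB, hdetprod]
end

section
/- Let H be an N_r×N_t complex matrix with rank(H) ≥ K ≥ 1, let λ₁ ≥ … ≥ λ_K > 0 be the K largest eigenvalues of HᴴH, let U₁ be an N_t×K matrix whose columns are orthonormal eigenvectors of HᴴH corresponding to λ₁, …, λ_K, and let P_total > 0. Then for every N_t×K complex matrix P with tr(PᴴP) ≤ P_total, det(Pᴴ Hᴴ H P) ≤ (P_total/K)^K · ∏_{i=1}^K λ_i (in particular this determinant is a nonnegative real number); moreover, for every K×K unitary matrix V, the matrix P = √(P_total/K) · U₁ V satisfies tr(PᴴP) = P_total and achieves equality. -/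
open Matrix BigOperators
open scoped ComplexOrder

section CauchyBinetAux
open Finset

noncomputable def minorSq {n k : ℕ} (X : Matrix (Fin n) (Fin k) ℂ) (s : Finset (Fin n)) : ℝ :=
  if h : s.card = k then
    Complex.normSq ((X.submatrix (fun i => s.orderEmbOfFin h i) id).det) else 0

lemma minorSq_nonneg {n k : ℕ} (X : Matrix (Fin n) (Fin k) ℂ) (s : Finset (Fin n)) :
    0 ≤ minorSq X s := by
  unfold minorSq; split
  · exact Complex.normSq_nonneg _
  · exact le_refl 0

lemma key_expansion {n k : ℕ} (X : Matrix (Fin n) (Fin k) ℂ) (d : Fin n → ℂ) :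
    (Xᴴ * Matrix.diagonal d * X).det
      = ∑ f : Fin k → Fin n, (∏ i, d (f i)) * ((∏ i, X (f i) i) *
          (starRingEnd ℂ) ((X.submatrix f id).det)) := by
  classical
  have hM : ∀ i j, (Xᴴ * Matrix.diagonal d * X) i j
      = ∑ t, (starRingEnd ℂ) (X t i) * d t * X t j := by
    intro i j
    rw [Matrix.mul_apply]
    refine Finset.sum_congr rfl fun t _ => ?_
    rw [Matrix.mul_diagonal, Matrix.conjTranspose_apply]
    rfl
  have hdetsub : ∀ f : Fin k → Fin n,
      (X.submatrix f id).det
        = ∑ σ : Equiv.Perm (Fin k), ((Equiv.Perm.sign σ : ℤ) : ℂ) * ∏ i, X (f i) (σ i) := by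
    intro f
    rw [← Matrix.det_transpose, Matrix.det_apply']
    simp [Matrix.transpose_apply, Matrix.submatrix_apply]
  rw [Matrix.det_apply']
  have h1 : ∀ σ : Equiv.Perm (Fin k),
      ((Equiv.Perm.sign σ : ℤ) : ℂ) * ∏ i, (Xᴴ * Matrix.diagonal d * X) (σ i) i
        = ∑ f : Fin k → Fin n, ((Equiv.Perm.sign σ : ℤ) : ℂ)
            * ∏ i, ((starRingEnd ℂ) (X (f i) (σ i)) * d (f i) * X (f i) i) := by
    intro σ
    have hp : ∏ i, (Xᴴ * Matrix.diagonal d * X) (σ i) i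
        = ∑ f : Fin k → Fin n,
            ∏ i, ((starRingEnd ℂ) (X (f i) (σ i)) * d (f i) * X (f i) i) := by
      have e1 : ∏ i, (Xᴴ * Matrix.diagonal d * X) (σ i) i
          = ∏ i, ∑ t, (starRingEnd ℂ) (X t (σ i)) * d t * X t i :=
        Finset.prod_congr rfl fun i _ => hM (σ i) i
      rw [e1, Finset.prod_univ_sum, Fintype.piFinset_univ]
    rw [hp, Finset.mul_sum]
  rw [Finset.sum_congr rfl fun σ _ => h1 σ, Finset.sum_comm]
  refine Finset.sum_congr rfl fun f _ => ?_
  have h2 : ∀ σ : Equiv.Perm (Fin k),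
      ∏ i, ((starRingEnd ℂ) (X (f i) (σ i)) * d (f i) * X (f i) i)
        = (∏ i, (starRingEnd ℂ) (X (f i) (σ i))) * ((∏ i, d (f i)) * ∏ i, X (f i) i) := by
    intro σ
    rw [Finset.prod_mul_distrib, Finset.prod_mul_distrib, mul_assoc]
  have h3 : ∑ σ : Equiv.Perm (Fin k), ((Equiv.Perm.sign σ : ℤ) : ℂ)
      * ∏ i, (starRingEnd ℂ) (X (f i) (σ i))
        = (starRingEnd ℂ) ((X.submatrix f id).det) := by
    rw [hdetsub f, map_sum]
    refine Finset.sum_congr rfl fun σ _ => ?_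
    rw [_root_.map_mul, map_intCast, _root_.map_prod]
  calc ∑ σ : Equiv.Perm (Fin k), ((Equiv.Perm.sign σ : ℤ) : ℂ)
          * ∏ i, ((starRingEnd ℂ) (X (f i) (σ i)) * d (f i) * X (f i) i)
      = (∑ σ : Equiv.Perm (Fin k), ((Equiv.Perm.sign σ : ℤ) : ℂ)
          * ∏ i, (starRingEnd ℂ) (X (f i) (σ i))) * ((∏ i, d (f i)) * ∏ i, X (f i) i) := by
        rw [Finset.sum_mul]
        exact Finset.sum_congr rfl fun σ _ => by rw [h2 σ, mul_assoc]
    _ = (∏ i, d (f i)) * ((∏ i, X (f i) i) * (starRingEnd ℂ) ((X.submatrix f id).det)) := by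
        rw [h3]; ring

section
variable {n k : ℕ} (X : Matrix (Fin n) (Fin k) ℂ) (d : Fin n → ℂ)

lemma fiber_sum (s : Finset (Fin n)) (hs : s.card = k) :
    ∑ f ∈ (Finset.univ.filter (fun f : Fin k → Fin n => Function.Injective f)).filter
        (fun f => Finset.image f Finset.univ = s),
      (∏ i, d (f i)) * ((∏ i, X (f i) i) * (starRingEnd ℂ) ((X.submatrix f id).det))
    = (∏ t ∈ s, d t) * (minorSq X s : ℂ) := by
  classical
  set g : Fin k → Fin n := fun i => s.orderEmbOfFin hs i with hg
  have hginj : Function.Injective g := (s.orderEmbOfFin hs).injective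
  have hgmem : ∀ i, g i ∈ s := fun i => Finset.orderEmbOfFin_mem s hs i
  have hgimg : Finset.image g Finset.univ = s := by
    apply Finset.eq_of_subset_of_card_le
    · intro t ht
      obtain ⟨i, _, rfl⟩ := Finset.mem_image.mp ht
      exact hgmem i
    · rw [Finset.card_image_of_injective _ hginj, Finset.card_univ, Fintype.card_fin, hs]
  have step : ∑ f ∈ (Finset.univ.filter (fun f : Fin k → Fin n => Function.Injective f)).filter
        (fun f => Finset.image f Finset.univ = s),
      (∏ i, d (f i)) * ((∏ i, X (f i) i) * (starRingEnd ℂ) ((X.submatrix f id).det))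
      = ∑ σ : Equiv.Perm (Fin k),
        (∏ i, d (g (σ i))) * ((∏ i, X (g (σ i)) i) *
          (starRingEnd ℂ) ((X.submatrix (g ∘ σ) id).det)) := by
    refine (Finset.sum_bij (fun (σ : Equiv.Perm (Fin k)) _ => g ∘ σ) ?_ ?_ ?_ ?_).symm
    · intro σ _
      simp only [Finset.mem_filter, Finset.mem_univ, true_and]
      constructor
      · exact hginj.comp σ.injective
      · rw [show Finset.image (g ∘ σ) Finset.univ = Finset.image g (Finset.image σ Finset.univ) from
          (Finset.image_image).symm, Finset.image_univ_equiv, hgimg]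
    · intro σ₁ _ σ₂ _ h
      exact Equiv.ext fun i => hginj (congrFun h i)
    · intro f hf
      simp only [Finset.mem_filter, Finset.mem_univ, true_and] at hf
      obtain ⟨hfinj, hfimg⟩ := hf
      have hmem : ∀ i, f i ∈ s := by
        intro i; rw [← hfimg]; exact Finset.mem_image_of_mem f (Finset.mem_univ i)
      set φ : Fin k → s := fun i => ⟨f i, hmem i⟩ with hφ
      have hφinj : Function.Injective φ := fun a b h => hfinj (Subtype.ext_iff.mp h)
      have hφbij : Function.Bijective φ := by
        rw [Fintype.bijective_iff_injective_and_card]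
        exact ⟨hφinj, by rw [Fintype.card_coe, hs, Fintype.card_fin]⟩
      refine ⟨(Equiv.ofBijective φ hφbij).trans (s.orderIsoOfFin hs).toEquiv.symm,
        Finset.mem_univ _, ?_⟩
      funext i
      show g _ = f i
      have h5 : (s.orderIsoOfFin hs) ((s.orderIsoOfFin hs).toEquiv.symm (φ i)) = φ i := by
        simp
      calc g ((Equiv.ofBijective φ hφbij).trans (s.orderIsoOfFin hs).toEquiv.symm  i)
          = ((φ i : s) : Fin n) := by
            show (s.orderEmbOfFin hs) _ = _
            rw [← Finset.coe_orderIsoOfFin_apply, ← h5]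
            rfl
        _ = f i := rfl
    · intro σ _
      rfl
  rw [step]
  have hds : ∀ σ : Equiv.Perm (Fin k), ∏ i, d (g (σ i)) = ∏ t ∈ s, d t := by
    intro σ
    rw [Equiv.prod_comp σ (fun i => d (g i)), ← hgimg,
      Finset.prod_image (fun a _ b _ h => hginj h)]
  have hdet : ∀ σ : Equiv.Perm (Fin k),
      (X.submatrix (g ∘ σ) id).det
        = ((Equiv.Perm.sign σ : ℤ) : ℂ) * (X.submatrix g id).det := by
    intro σ
    have h6 : X.submatrix (g ∘ σ) id = (X.submatrix g id).submatrix σ id := by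
      rw [Matrix.submatrix_submatrix]
      rfl
    rw [h6, Matrix.det_permute]
  have hdetg : (X.submatrix g id).det
      = ∑ σ : Equiv.Perm (Fin k), ((Equiv.Perm.sign σ : ℤ) : ℂ) * ∏ i, X (g (σ i)) i := by
    rw [Matrix.det_apply']
    rfl
  calc ∑ σ : Equiv.Perm (Fin k),
        (∏ i, d (g (σ i))) * ((∏ i, X (g (σ i)) i) *
          (starRingEnd ℂ) ((X.submatrix (g ∘ σ) id).det))
      = ∑ σ : Equiv.Perm (Fin k),
        (∏ t ∈ s, d t) * ((starRingEnd ℂ) ((X.submatrix g id).det) *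
          (((Equiv.Perm.sign σ : ℤ) : ℂ) * ∏ i, X (g (σ i)) i)) := by
        refine Finset.sum_congr rfl fun σ _ => ?_
        rw [hds σ, hdet σ, _root_.map_mul, map_intCast]
        ring
    _ = (∏ t ∈ s, d t) * ((starRingEnd ℂ) ((X.submatrix g id).det) * (X.submatrix g id).det) := by
        rw [← Finset.mul_sum, ← Finset.mul_sum, hdetg]
    _ = (∏ t ∈ s, d t) * (minorSq X s : ℂ) := by
        rw [minorSq, dif_pos hs]
        congr 1
        rw [mul_comm, Complex.mul_conj]

lemma cauchy_binet_s4 (X : Matrix (Fin n) (Fin k) ℂ) (d : Fin n → ℂ) :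
    (Xᴴ * Matrix.diagonal d * X).det
      = ∑ s ∈ Finset.univ.powersetCard k, (∏ t ∈ s, d t) * (minorSq X s : ℂ) := by
  classical
  rw [key_expansion]
  set F : (Fin k → Fin n) → ℂ := fun f =>
    (∏ i, d (f i)) * ((∏ i, X (f i) i) * (starRingEnd ℂ) ((X.submatrix f id).det)) with hF
  have h1 : ∑ f : Fin k → Fin n, F f
      = ∑ f ∈ Finset.univ.filter (fun f : Fin k → Fin n => Function.Injective f), F f := by
    refine (Finset.sum_subset (Finset.filter_subset _ _) ?_).symm
    intro f _ hf
    simp only [Finset.mem_filter, Finset.mem_univ, true_and] at hf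
    obtain ⟨a, b, hab, hne⟩ := Function.not_injective_iff.mp hf
    have hrow : (X.submatrix f id) a = (X.submatrix f id) b := by
      funext l
      simp [Matrix.submatrix_apply, hab]
    rw [hF]
    simp [Matrix.det_zero_of_row_eq hne hrow]
  rw [h1]
  rw [← Finset.sum_fiberwise_of_maps_to (g := fun f : Fin k → Fin n => Finset.image f Finset.univ)
    (t := Finset.univ.powersetCard k) ?_]
  · refine Finset.sum_congr rfl fun s hs => ?_
    have hcard : s.card = k := (Finset.mem_powersetCard_univ.mp hs)
    exact fiber_sum X d s hcard
  · intro f hf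
    simp only [Finset.mem_filter, Finset.mem_univ, true_and] at hf
    rw [Finset.mem_powersetCard_univ, Finset.card_image_of_injective _ hf,
      Finset.card_univ, Fintype.card_fin]
end


lemma amgm {K : ℕ} (hK : 1 ≤ K) (ν : Fin K → ℝ) (hν : ∀ i, 0 ≤ ν i) :
    ∏ i, ν i ≤ ((∑ i, ν i) / K) ^ K := by
  have hK0 : (0:ℝ) < K := by exact_mod_cast hK
  have h := Real.geom_mean_le_arith_mean_weighted Finset.univ (fun _ => 1/(K:ℝ)) ν
    (fun i _ => by positivity)
    (by simp [Finset.card_univ]; field_simp) (fun i _ => hν i)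
  have hsum : ∑ i, (1/(K:ℝ)) * ν i = (∑ i, ν i) / K := by
    rw [← Finset.mul_sum]; field_simp
  rw [hsum] at h
  have hprod_nonneg : 0 ≤ ∏ i, ν i ^ (1/(K:ℝ)) :=
    Finset.prod_nonneg fun i _ => Real.rpow_nonneg (hν i) _
  have key : (∏ i, ν i ^ (1/(K:ℝ))) ^ K = ∏ i, ν i := by
    rw [← Finset.prod_pow]
    refine Finset.prod_congr rfl fun i _ => ?_
    rw [← Real.rpow_natCast (ν i ^ (1/(K:ℝ))) K, ← Real.rpow_mul (hν i)]
    rw [one_div, inv_mul_cancel₀ (ne_of_gt hK0), Real.rpow_one]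
  calc ∏ i, ν i = (∏ i, ν i ^ (1/(K:ℝ))) ^ K := key.symm
    _ ≤ ((∑ i, ν i) / K) ^ K := pow_le_pow_left₀ hprod_nonneg h K

lemma le_emb_aux {k n : ℕ} (g : Fin k ↪o Fin n) :
    ∀ m : ℕ, ∀ i : Fin k, (i : ℕ) = m → m ≤ (g i : ℕ) := by
  intro m
  induction m with
  | zero => intro i _; exact Nat.zero_le _
  | succ j ih =>
      intro i hi
      have hj : j < k := by omega
      have h1 := ih ⟨j, hj⟩ rfl
      have h2 : g ⟨j, hj⟩ < g i := g.strictMono (by simp only [Fin.lt_def, Fin.val_mk]; omega)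
      rw [Fin.lt_def] at h2
      omega

lemma le_emb {k n : ℕ} (g : Fin k ↪o Fin n) (i : Fin k) : (i : ℕ) ≤ (g i : ℕ) :=
  le_emb_aux g (i : ℕ) i rfl

lemma subset_prod_le {Nt K : ℕ} (hKNt : K ≤ Nt) (mu : Fin Nt → ℝ)
    (hmu_anti : Antitone mu) (hmu_nonneg : ∀ i, 0 ≤ mu i)
    (s : Finset (Fin Nt)) (hs : s.card = K) :
    ∏ t ∈ s, mu t ≤ ∏ i : Fin K, mu (Fin.castLE hKNt i) := by
  have himg : Finset.image (fun i => s.orderEmbOfFin hs i) Finset.univ = s := by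
    apply Finset.eq_of_subset_of_card_le
    · rintro t ht
      obtain ⟨i, _, rfl⟩ := Finset.mem_image.mp ht
      exact Finset.orderEmbOfFin_mem s hs i
    · rw [Finset.card_image_of_injective _ (s.orderEmbOfFin hs).injective,
        Finset.card_univ, Fintype.card_fin, hs]
  have h1 : ∏ t ∈ s, mu t = ∏ i : Fin K, mu (s.orderEmbOfFin hs i) := by
    conv_lhs => rw [← himg]
    rw [Finset.prod_image (fun a _ b _ h => by
      exact (s.orderEmbOfFin hs).injective h)]
  rw [h1]
  refine Finset.prod_le_prod (fun i _ => hmu_nonneg _) (fun i _ => ?_)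
  apply hmu_anti
  show Fin.castLE hKNt i ≤ s.orderEmbOfFin hs i
  have := le_emb (s.orderEmbOfFin hs) i
  exact Fin.le_def.mpr (by simpa using this)

end CauchyBinetAux

/-- Let `H` be an `N_r × N_t` complex matrix with
`rank H ≥ K ≥ 1`, let `lam 1 ≥ … ≥ lam K > 0` be the `K` largest eigenvalues
of `HᴴH`, let `U₁` have orthonormal columns that are eigenvectors of `HᴴH`
for these eigenvalues, and let `P_total > 0`.  Then every `N_t × K` precoder
`P` with `tr(PᴴP) ≤ P_total` satisfies
`det(Pᴴ Hᴴ H P) ≤ (P_total/K)^K ∏ lam i` (and this determinant is a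
nonnegative real number); moreover, for every `K × K` unitary `V`, the matrix
`P = √(P_total/K) • U₁ V` meets the power constraint with equality and
achieves the bound with equality. -/
theorem det_precoded_channel_le_and_unitary_optimal
    {Nr Nt K : ℕ} (hK : 1 ≤ K) (hKNt : K ≤ Nt)
    (H : Matrix (Fin Nr) (Fin Nt) ℂ) (hrank : K ≤ H.rank)
    (lam : Fin K → ℝ) (hlam_pos : ∀ i, 0 < lam i)
    (mu : Fin Nt → ℝ) (hmu_anti : Antitone mu)
    (hA : (Hᴴ * H).IsHermitian)
    (hmu : ∃ σ : Equiv.Perm (Fin Nt), mu = hA.eigenvalues ∘ σ)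
    (hlam : ∀ i : Fin K, lam i = mu (Fin.castLE hKNt i))
    (U₁ : Matrix (Fin Nt) (Fin K) ℂ)
    (hU₁orth : U₁ᴴ * U₁ = 1)
    (hU₁eig : Hᴴ * H * U₁ = U₁ * Matrix.diagonal (fun i => (lam i : ℂ)))
    (Ptot : ℝ) (hPtot : 0 < Ptot) :
    (∀ P : Matrix (Fin Nt) (Fin K) ℂ, (Pᴴ * P).trace.re ≤ Ptot →
      (Pᴴ * Hᴴ * H * P).det.im = 0 ∧ 0 ≤ (Pᴴ * Hᴴ * H * P).det.re ∧
        (Pᴴ * Hᴴ * H * P).det.re ≤ (Ptot / K) ^ K * ∏ i, lam i) ∧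
    (∀ V : Matrix (Fin K) (Fin K) ℂ, V ∈ Matrix.unitaryGroup (Fin K) ℂ →
      (((Real.sqrt (Ptot / K) : ℂ) • (U₁ * V))ᴴ *
          ((Real.sqrt (Ptot / K) : ℂ) • (U₁ * V))).trace = (Ptot : ℂ) ∧
      (((Real.sqrt (Ptot / K) : ℂ) • (U₁ * V))ᴴ * Hᴴ * H *
          ((Real.sqrt (Ptot / K) : ℂ) • (U₁ * V))).det =
        (((Ptot / K) ^ K * ∏ i, lam i : ℝ) : ℂ)) := by
  constructor
  · -- Part 1: the upper bound
      intro P hP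
      obtain ⟨σ, hmuσ⟩ := hmu
      have hKR : (0:ℝ) < K := by exact_mod_cast hK
      have hPSD : (Hᴴ * H).PosSemidef := Matrix.posSemidef_conjTranspose_mul_self H
      have heig_nonneg : ∀ t, 0 ≤ hA.eigenvalues t := fun t => hPSD.eigenvalues_nonneg t
      have hmu_nonneg : ∀ i, 0 ≤ mu i := by
        intro i; rw [hmuσ]; exact heig_nonneg _
      set V : Matrix (Fin Nt) (Fin Nt) ℂ := (hA.eigenvectorUnitary : Matrix (Fin Nt) (Fin Nt) ℂ)
        with hVdef
      have hVmem : V ∈ Matrix.unitaryGroup (Fin Nt) ℂ := hA.eigenvectorUnitary.2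
      have hVV' : V * Vᴴ = 1 := by
        rw [← Matrix.star_eq_conjTranspose]
        exact Matrix.mem_unitaryGroup_iff.mp hVmem
      set Q : Matrix (Fin Nt) (Fin K) ℂ := Vᴴ * P with hQdef
      set e : Fin Nt → ℂ := fun t => ((hA.eigenvalues t : ℝ) : ℂ) with hedef
      have hPAP : Pᴴ * Hᴴ * H * P = Qᴴ * Matrix.diagonal e * Q := by
        have hsp : Hᴴ * H = V * Matrix.diagonal e * Vᴴ := by
          rw [← Matrix.star_eq_conjTranspose]
          exact hA.spectral_theorem
        calc Pᴴ * Hᴴ * H * P = Pᴴ * (Hᴴ * H) * P := by rw [Matrix.mul_assoc Pᴴ]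
          _ = Pᴴ * (V * Matrix.diagonal e * Vᴴ) * P := by rw [hsp]
          _ = Qᴴ * Matrix.diagonal e * Q := by
              rw [hQdef, Matrix.conjTranspose_mul, Matrix.conjTranspose_conjTranspose]
              simp only [Matrix.mul_assoc]
      have CB1 := cauchy_binet_s4 Q e
      set r : ℝ := ∑ s ∈ Finset.univ.powersetCard K,
          (∏ t ∈ s, hA.eigenvalues t) * minorSq Q s with hrdef
      have hdet_r : (Pᴴ * Hᴴ * H * P).det = (r : ℂ) := by
        rw [hPAP, CB1, hrdef]
        push_cast
        rfl
      -- nonneg and product bound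
      have hL : (0:ℝ) ≤ ∏ i, lam i := Finset.prod_nonneg fun i _ => (hlam_pos i).le
      have hbound : ∀ s ∈ Finset.univ.powersetCard K,
          (0:ℝ) ≤ ∏ t ∈ s, hA.eigenvalues t ∧ ∏ t ∈ s, hA.eigenvalues t ≤ ∏ i, lam i := by
        intro s hs
        have hcard : s.card = K := Finset.mem_powersetCard_univ.mp hs
        constructor
        · exact Finset.prod_nonneg fun t _ => heig_nonneg t
        · have h1 : ∏ t ∈ s, hA.eigenvalues t = ∏ u ∈ s.image σ.symm, mu u := by
            rw [Finset.prod_image (fun a _ b _ h => σ.symm.injective h)]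
            refine Finset.prod_congr rfl fun t _ => ?_
            rw [hmuσ]
            simp
          have h2 : (s.image σ.symm).card = K := by
            rw [Finset.card_image_of_injective _ σ.symm.injective, hcard]
          rw [h1]
          calc ∏ u ∈ s.image σ.symm, mu u ≤ ∏ i : Fin K, mu (Fin.castLE hKNt i) :=
                subset_prod_le hKNt mu hmu_anti hmu_nonneg _ h2
            _ = ∏ i, lam i := Finset.prod_congr rfl fun i _ => (hlam i).symm
      -- eigenvalues of PᴴP
      have hQQ : Qᴴ * Q = Pᴴ * P := by
        rw [hQdef, Matrix.conjTranspose_mul, Matrix.conjTranspose_conjTranspose,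
          Matrix.mul_assoc, ← Matrix.mul_assoc V, hVV', Matrix.one_mul]
      have hPP : (Pᴴ * P).PosSemidef := Matrix.posSemidef_conjTranspose_mul_self P
      have hPPH : (Pᴴ * P).IsHermitian := hPP.isHermitian
      have hν_nonneg : ∀ i, 0 ≤ hPPH.eigenvalues i := fun i => hPP.eigenvalues_nonneg i
      have hdetPP : (Pᴴ * P).det = ((∏ i, hPPH.eigenvalues i : ℝ) : ℂ) := by
        rw [hPPH.det_eq_prod_eigenvalues]
        push_cast
        rfl
      have htrPP : (Pᴴ * P).trace.re = ∑ i, hPPH.eigenvalues i := by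
        have hW : (hPPH.eigenvectorUnitary : Matrix (Fin K) (Fin K) ℂ) ∈
            Matrix.unitaryGroup (Fin K) ℂ := hPPH.eigenvectorUnitary.2
        have hWW : star (hPPH.eigenvectorUnitary : Matrix (Fin K) (Fin K) ℂ) *
            (hPPH.eigenvectorUnitary : Matrix (Fin K) (Fin K) ℂ) = 1 :=
          Matrix.mem_unitaryGroup_iff'.mp hW
        have htr : (Pᴴ * P).trace
            = ∑ i, ((hPPH.eigenvalues i : ℝ) : ℂ) := by
          calc (Pᴴ * P).trace
              = ((hPPH.eigenvectorUnitary : Matrix (Fin K) (Fin K) ℂ) *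
                  Matrix.diagonal (RCLike.ofReal ∘ hPPH.eigenvalues) *
                  star (hPPH.eigenvectorUnitary : Matrix (Fin K) (Fin K) ℂ)).trace := by
                exact congrArg Matrix.trace hPPH.spectral_theorem
            _ = (star (hPPH.eigenvectorUnitary : Matrix (Fin K) (Fin K) ℂ) *
                  ((hPPH.eigenvectorUnitary : Matrix (Fin K) (Fin K) ℂ) *
                  Matrix.diagonal (RCLike.ofReal ∘ hPPH.eigenvalues))).trace := by
                rw [Matrix.trace_mul_comm]
            _ = (Matrix.diagonal (RCLike.ofReal ∘ hPPH.eigenvalues)).trace := by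
                rw [← Matrix.mul_assoc, hWW, Matrix.one_mul]
            _ = ∑ i, ((hPPH.eigenvalues i : ℝ) : ℂ) := by
                rw [Matrix.trace_diagonal]
                rfl
        rw [htr]
        rw [Complex.re_sum]
        push_cast
        rfl
      have CB2 := cauchy_binet_s4 Q (fun _ => (1:ℂ))
      have hminor_sum : ∑ s ∈ Finset.univ.powersetCard K, minorSq Q s
          = ∏ i, hPPH.eigenvalues i := by
        have h3 : Qᴴ * (Matrix.diagonal (fun _ => (1:ℂ)) : Matrix (Fin Nt) (Fin Nt) ℂ) * Q = Pᴴ * P := by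
          rw [Matrix.diagonal_one, Matrix.mul_one, hQQ]
        rw [h3] at CB2
        have h4 : (Pᴴ * P).det = ((∑ s ∈ Finset.univ.powersetCard K, minorSq Q s : ℝ) : ℂ) := by
          rw [CB2]
          push_cast
          simp
        rw [hdetPP] at h4
        exact_mod_cast h4.symm
      -- assemble
      have hr0 : (0:ℝ) ≤ r :=
        Finset.sum_nonneg fun s hs => mul_nonneg (hbound s hs).1 (minorSq_nonneg Q s)
      have hν_sum_nonneg : (0:ℝ) ≤ ∑ i, hPPH.eigenvalues i :=
        Finset.sum_nonneg fun i _ => hν_nonneg i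
      have hSP : ∑ i, hPPH.eigenvalues i ≤ Ptot := htrPP ▸ hP
      refine ⟨by rw [hdet_r]; exact Complex.ofReal_im r,
        by rw [hdet_r]; simpa only [Complex.ofReal_re] using hr0, ?_⟩
      rw [hdet_r]
      simp only [Complex.ofReal_re]
      calc r ≤ (∏ i, lam i) * ∑ s ∈ Finset.univ.powersetCard K, minorSq Q s := by
            rw [hrdef, Finset.mul_sum]
            exact Finset.sum_le_sum fun s hs =>
              (mul_comm (∏ t ∈ s, hA.eigenvalues t) (minorSq Q s)) ▸
              (mul_comm (∏ i, lam i) (minorSq Q s)) ▸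
              mul_le_mul_of_nonneg_left (hbound s hs).2 (minorSq_nonneg Q s)
        _ = (∏ i, lam i) * ∏ i, hPPH.eigenvalues i := by rw [hminor_sum]
        _ ≤ (∏ i, lam i) * (((∑ i, hPPH.eigenvalues i) / K) ^ K) :=
            mul_le_mul_of_nonneg_left (amgm hK _ hν_nonneg) hL
        _ ≤ (∏ i, lam i) * ((Ptot / K) ^ K) := by
            refine mul_le_mul_of_nonneg_left ?_ hL
            refine pow_le_pow_left₀ (div_nonneg hν_sum_nonneg hKR.le) ?_ K
            gcongr
        _ = (Ptot / K) ^ K * ∏ i, lam i := mul_comm _ _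
  · -- Part 2: equality case
      intro V hV
      have hKR : (0:ℝ) < K := by exact_mod_cast hK
      have hr : (0:ℝ) ≤ Ptot / K := le_of_lt (div_pos hPtot hKR)
      have hc2 : star ((Real.sqrt (Ptot / K) : ℂ)) * (Real.sqrt (Ptot / K) : ℂ)
          = ((Ptot / K : ℝ) : ℂ) := by
        rw [show star ((Real.sqrt (Ptot / K) : ℂ)) = (starRingEnd ℂ) ((Real.sqrt (Ptot / K) : ℂ)) from rfl,
          Complex.conj_ofReal, ← Complex.ofReal_mul, Real.mul_self_sqrt hr]
      have hVV : Vᴴ * V = 1 := (Matrix.mem_unitaryGroup_iff'.mp hV)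
      have hUV : (U₁ * V)ᴴ * (U₁ * V) = 1 := by
        rw [Matrix.conjTranspose_mul, Matrix.mul_assoc, ← Matrix.mul_assoc U₁ᴴ, hU₁orth,
          Matrix.one_mul, hVV]
      constructor
      · rw [Matrix.conjTranspose_smul, Matrix.smul_mul, Matrix.mul_smul, smul_smul, hUV,
          Matrix.trace_smul, Matrix.trace_one, hc2]
        rw [smul_eq_mul, Fintype.card_fin, ← Complex.ofReal_natCast, ← Complex.ofReal_mul]
        congr 1
        field_simp
      · have hdiag : (U₁ * V)ᴴ * Hᴴ * H * (U₁ * V)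
            = Vᴴ * Matrix.diagonal (fun i => (lam i : ℂ)) * V := by
          calc (U₁ * V)ᴴ * Hᴴ * H * (U₁ * V)
              = Vᴴ * (U₁ᴴ * (Hᴴ * H * U₁)) * V := by
                rw [Matrix.conjTranspose_mul]
                simp only [Matrix.mul_assoc]
            _ = Vᴴ * Matrix.diagonal (fun i => (lam i : ℂ)) * V := by
                rw [hU₁eig, ← Matrix.mul_assoc U₁ᴴ, hU₁orth, Matrix.one_mul]
        have hsmul : ((Real.sqrt (Ptot / K) : ℂ) • (U₁ * V))ᴴ * Hᴴ * H *
            ((Real.sqrt (Ptot / K) : ℂ) • (U₁ * V))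
            = ((Ptot / K : ℝ) : ℂ) • (Vᴴ * Matrix.diagonal (fun i => (lam i : ℂ)) * V) := by
          rw [Matrix.conjTranspose_smul, Matrix.smul_mul, Matrix.smul_mul, Matrix.smul_mul,
            Matrix.mul_smul, smul_smul, hc2, hdiag]
        rw [hsmul, Matrix.det_smul, Matrix.det_mul, Matrix.det_mul, Fintype.card_fin]
        have hdet1 : Vᴴ.det * V.det = 1 := by
          rw [← Matrix.det_mul, hVV, Matrix.det_one]
        have : Vᴴ.det * (Matrix.diagonal (fun i => (lam i : ℂ))).det * V.det
            = (Matrix.diagonal (fun i => (lam i : ℂ))).det := by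
          calc Vᴴ.det * (Matrix.diagonal (fun i => (lam i : ℂ))).det * V.det
              = (Vᴴ.det * V.det) * (Matrix.diagonal (fun i => (lam i : ℂ))).det := by ring
            _ = _ := by rw [hdet1, one_mul]
        rw [this, Matrix.det_diagonal]
        push_cast
        ring
end

section
/- Let N be a K×K positive definite Hermitian complex matrix with Cholesky factorization N = L Lᴴ, where L is lower triangular with strictly positive real diagonal entries. Then: (i) for every K×K lower triangular complex matrix C with all diagonal entries equal to 1, and every k ∈ {1, …, K}, the k-th diagonal entry of C N Cᴴ satisfies (C N Cᴴ)_kk ≥ L_kk²; and (ii) the matrix C = Diag(L₁₁, …, L_KK) · L^{-1} is lower triangular with unit diagonal and satisfies C N Cᴴ = Diag(L₁₁², …, L_KK²), so it achieves the lower bound simultaneously for every k. -/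
open Matrix BigOperators
open scoped ComplexOrder

lemma tri_mul_diag {K : ℕ} (A B : Matrix (Fin K) (Fin K) ℂ)
    (hA : ∀ i j : Fin K, i < j → A i j = 0)
    (hB : ∀ i j : Fin K, i < j → B i j = 0) (k : Fin K) :
    (A * B) k k = A k k * B k k := by
  rw [Matrix.mul_apply, Finset.sum_eq_single k]
  · intro j _ hj
    rcases lt_or_gt_of_ne hj with h | h
    · rw [hB j k h, mul_zero]
    · rw [hA k j h, zero_mul]
  · simp

/-- optimal DFE feedback matrix.  Let `N = L Lᴴ` be the
Cholesky factorization of a `K × K` positive definite Hermitian complex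
matrix.  (i) For every lower triangular `C` with unit diagonal, each diagonal
entry of `C N Cᴴ` is a real number at least `L_kk²`.  (ii) The matrix
`C = Diag(L₁₁,…,L_KK) L⁻¹` is lower triangular with unit diagonal and
satisfies `C N Cᴴ = Diag(L₁₁²,…,L_KK²)`, achieving all the bounds
simultaneously. -/
theorem dfe_feedback_matrix_optimal
    {K : ℕ} (N L : Matrix (Fin K) (Fin K) ℂ)
    (hNpd : N.PosDef)
    (hLtri : ∀ i j : Fin K, i < j → L i j = 0)
    (hLdiag : ∀ i : Fin K, 0 < (L i i).re ∧ (L i i).im = 0)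
    (hChol : N = L * Lᴴ) :
    (∀ C : Matrix (Fin K) (Fin K) ℂ,
      (∀ i j : Fin K, i < j → C i j = 0) → (∀ k : Fin K, C k k = 1) →
      ∀ k : Fin K, ((C * N * Cᴴ) k k).im = 0 ∧
        (L k k).re ^ 2 ≤ ((C * N * Cᴴ) k k).re) ∧
    (∀ i j : Fin K, i < j →
      (Matrix.diagonal (fun k => L k k) * L⁻¹) i j = 0) ∧
    (∀ k : Fin K, (Matrix.diagonal (fun k => L k k) * L⁻¹) k k = 1) ∧
    (Matrix.diagonal (fun k => L k k) * L⁻¹) * N *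
        (Matrix.diagonal (fun k => L k k) * L⁻¹)ᴴ =
      Matrix.diagonal (fun k => L k k ^ 2) := by
  -- L is invertible
  have hNu : IsUnit N.det := hNpd.det_pos.ne'.isUnit
  have hLu : IsUnit L.det := by
    rw [hChol, Matrix.det_mul] at hNu
    exact isUnit_of_mul_isUnit_left hNu
  have hLinv : L⁻¹ * L = 1 := Matrix.nonsing_inv_mul L hLu
  have hLinv' : L * L⁻¹ = 1 := Matrix.mul_nonsing_inv L hLu
  have hLuH : IsUnit Lᴴ.det := by
    rw [hChol, Matrix.det_mul] at hNu
    exact isUnit_of_mul_isUnit_right hNu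
  -- L⁻¹ is lower triangular
  haveI : Invertible L := (Matrix.isUnit_iff_isUnit_det L).mpr hLu |>.invertible
  have hLbt : L.BlockTriangular (OrderDual.toDual ∘ id) := by
    intro i j hij
    exact hLtri i j hij
  have hLinvTri : ∀ i j : Fin K, i < j → L⁻¹ i j = 0 := by
    intro i j hij
    exact Matrix.blockTriangular_inv_of_blockTriangular hLbt hij
  -- diagonal of L⁻¹
  have hLne : ∀ k : Fin K, L k k ≠ 0 := fun k h => by
    have := (hLdiag k).1; rw [h] at this; simp at this
  have hLinvDiag : ∀ k : Fin K, L⁻¹ k k = (L k k)⁻¹ := by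
    intro k
    have h1 : (L⁻¹ * L) k k = L⁻¹ k k * L k k := tri_mul_diag _ _ hLinvTri hLtri k
    rw [hLinv] at h1
    simp only [Matrix.one_apply_eq] at h1
    exact eq_inv_of_mul_eq_one_left h1.symm
  refine ⟨?_, ?_, ?_, ?_⟩
  · -- part (i)
    intro C hCtri hCdiag k
    set M := C * L with hM
    have hfact : C * N * Cᴴ = M * Mᴴ := by
      rw [hChol, hM, Matrix.conjTranspose_mul, Matrix.mul_assoc, Matrix.mul_assoc,
        Matrix.mul_assoc]
    have hentry : (C * N * Cᴴ) k k = ∑ j, (Complex.normSq (M k j) : ℂ) := by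
      rw [hfact, Matrix.mul_apply]
      congr 1; ext j
      rw [Matrix.conjTranspose_apply, Complex.star_def, Complex.mul_conj]
    have hMkk : M k k = L k k := by
      rw [hM, tri_mul_diag C L hCtri hLtri, hCdiag, one_mul]
    constructor
    · rw [hentry]
      rw [← Complex.ofReal_sum]
      exact Complex.ofReal_im _
    · rw [hentry, ← Complex.ofReal_sum, Complex.ofReal_re]
      have h1 : Complex.normSq (M k k) ≤ ∑ j, Complex.normSq (M k j) :=
        Finset.single_le_sum (fun j _ => Complex.normSq_nonneg _) (Finset.mem_univ k)
      have h2 : Complex.normSq (M k k) = (L k k).re ^ 2 := by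
        rw [hMkk, Complex.normSq_apply, (hLdiag k).2]; ring
      linarith
  · -- triangularity of D L⁻¹
    intro i j hij
    rw [Matrix.diagonal_mul, hLinvTri i j hij, mul_zero]
  · -- unit diagonal
    intro k
    rw [Matrix.diagonal_mul, hLinvDiag, mul_inv_cancel₀ (hLne k)]
  · -- the product
    have hDH : (Matrix.diagonal (fun k => L k k))ᴴ = Matrix.diagonal (fun k => L k k) := by
      have hs : (star fun k => L k k) = fun k => L k k := by
        funext k
        rw [Pi.star_apply]
        exact Complex.conj_eq_iff_im.mpr (hLdiag k).2
      rw [Matrix.diagonal_conjTranspose, hs]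
    rw [hChol, Matrix.conjTranspose_mul, Matrix.conjTranspose_nonsing_inv, hDH]
    calc Matrix.diagonal (fun k => L k k) * L⁻¹ * (L * Lᴴ) * ((Lᴴ)⁻¹ * Matrix.diagonal (fun k => L k k))
        = Matrix.diagonal (fun k => L k k) * ((L⁻¹ * L) * (Lᴴ * (Lᴴ)⁻¹)) * Matrix.diagonal (fun k => L k k) := by
          simp only [Matrix.mul_assoc]
      _ = Matrix.diagonal (fun k => L k k) * Matrix.diagonal (fun k => L k k) := by
          rw [hLinv, Matrix.mul_nonsing_inv _ hLuH, Matrix.one_mul, Matrix.mul_one]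
      _ = Matrix.diagonal (fun k => L k k ^ 2) := by
          rw [Matrix.diagonal_mul_diagonal]
          simp [sq]
end

section
/- Let A be an N_t×N_t Hermitian positive semidefinite complex matrix with eigenvalues λ₁ ≥ … ≥ λ_{N_t} ≥ 0, let K ≤ N_t, and let U₁ be an N_t×K matrix whose columns are orthonormal eigenvectors of A corresponding to λ₁, …, λ_K. Then for every N_t×K complex matrix P̄ with orthonormal columns (P̄ᴴP̄ = I), det(P̄ᴴ A P̄) ≥ (∏_{i=1}^K λ_i) · det(P̄ᴴ U₁ U₁ᴴ P̄), where both determinants are nonnegative real numbers. -/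
open Matrix BigOperators
open scoped ComplexOrder


variable {n : Type*} [Fintype n] [DecidableEq n]

lemma psd_det_eq {M : Matrix n n ℂ} (hM : M.PosSemidef) :
    M.det = ((∏ i, hM.isHermitian.eigenvalues i : ℝ) : ℂ) := by
  rw [hM.isHermitian.det_eq_prod_eigenvalues]
  exact (Complex.ofReal_prod Finset.univ _).symm

lemma psd_det_im {M : Matrix n n ℂ} (hM : M.PosSemidef) : M.det.im = 0 := by
  rw [psd_det_eq hM, Complex.ofReal_im]

lemma psd_det_re_nonneg {M : Matrix n n ℂ} (hM : M.PosSemidef) : 0 ≤ M.det.re := by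
  rw [psd_det_eq hM, Complex.ofReal_re]
  exact Finset.prod_nonneg (fun i _ => hM.eigenvalues_nonneg i)

lemma one_le_det_one_add {M : Matrix n n ℂ} (hM : M.PosSemidef) :
    (1 : ℝ) ≤ ((1 + M).det).re := by
  have h1M : ((1 : Matrix n n ℂ) + M).PosSemidef := Matrix.PosSemidef.add .one hM
  have key : ∀ i, (1:ℝ) ≤ h1M.isHermitian.eigenvalues i := by
    intro i
    set v := h1M.isHermitian.eigenvectorBasis i with hv
    have hnorm : ‖v‖ = 1 := h1M.isHermitian.eigenvectorBasis.orthonormal.1 i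
    have h1 : RCLike.re (dotProduct (star (⇑v)) (⇑v)) = 1 := by
      have : (inner ℂ v v : ℂ) = dotProduct (star (⇑v)) (⇑v) :=
        (EuclideanSpace.inner_eq_star_dotProduct v v).trans (dotProduct_comm _ _)
      rw [← this, inner_self_eq_norm_sq_to_K, hnorm]
      norm_num
    have heq := h1M.isHermitian.eigenvalues_eq i
    rw [← hv] at heq
    rw [heq, add_mulVec, one_mulVec, dotProduct_add, map_add, h1]
    have := hM.re_dotProduct_nonneg (⇑v)
    linarith
  rw [psd_det_eq h1M, Complex.ofReal_re]
  have := Finset.prod_le_prod (s := Finset.univ) (f := fun _ : n => (1:ℝ))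
    (g := h1M.isHermitian.eigenvalues) (fun i _ => zero_le_one) (fun i _ => key i)
  simpa using this

lemma det_re_mono {X Y : Matrix n n ℂ} (hY : Y.PosSemidef)
    (hS : (X - Y).PosSemidef) : Y.det.re ≤ X.det.re := by
  have hX : X.PosSemidef := by
    have := hY.add hS
    rwa [add_sub_cancel] at this
  by_cases hd : Y.det.re = 0
  · rw [hd]; exact psd_det_re_nonneg hX
  · -- Y is PosDef
    have hdet : Y.det ≠ 0 := fun h => hd (by rw [h]; rfl)
    have hYpd : Y.PosDef := by
      refine posDef_iff_dotProduct_mulVec.mpr ⟨hY.isHermitian, fun x hx => ?_⟩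
      have hle := hY.dotProduct_mulVec_nonneg x
      rcases lt_or_eq_of_le hle with h | h
      · exact h
      · exfalso
        have h0 : star x ⬝ᵥ Y *ᵥ x = 0 := h.symm
        rw [hY.dotProduct_mulVec_zero_iff] at h0
        have : Y *ᵥ x ≠ 0 := by
          have hinj := Matrix.mulVec_injective_iff_isUnit.mpr
            ((Matrix.isUnit_iff_isUnit_det Y).mpr hdet.isUnit)
          intro hc
          exact hx (hinj (by simpa using hc))
        exact this h0
    open MatrixOrder in set L := CFC.sqrt Y with hLdef
    open MatrixOrder in have hLher : L.IsHermitian := (CFC.sqrt_nonneg Y).posSemidef.isHermitian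
    open MatrixOrder in have hLL : L * L = Y := CFC.sqrt_mul_sqrt_self Y hY.nonneg
    have hLdet : IsUnit L.det := by
      have : L.det * L.det = Y.det := by rw [← det_mul, hLL]
      exact isUnit_iff_ne_zero.mpr (fun h => hdet (by rw [← this, h, mul_zero]))
    have hLunit : IsUnit L := (Matrix.isUnit_iff_isUnit_det L).mpr hLdet
    set M := L⁻¹ * (X - Y) * L⁻¹ with hMdef
    have hMpsd : M.PosSemidef := by
      have hinv : (L⁻¹)ᴴ = L⁻¹ := by rw [Matrix.conjTranspose_nonsing_inv, hLher.eq]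
      have h2 := hS.conjTranspose_mul_mul_same L⁻¹
      rwa [hinv] at h2
    have hXeq : X = L * (1 + M) * L := by
      rw [hMdef, mul_add, add_mul, mul_one, hLL]
      rw [show L * (L⁻¹ * (X - Y) * L⁻¹) * L
          = (L * L⁻¹) * (X - Y) * (L⁻¹ * L) by noncomm_ring]
      rw [Matrix.mul_nonsing_inv _ hLdet, Matrix.nonsing_inv_mul _ hLdet,
        one_mul, mul_one, add_sub_cancel]
    have hdetX : X.det = Y.det * (1 + M).det := by
      rw [hXeq, det_mul, det_mul, mul_comm L.det, mul_assoc, ← det_mul, hLL]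
      ring
    have hYre := psd_det_eq hY
    have hYnn : (0:ℝ) ≤ ∏ i, hY.isHermitian.eigenvalues i :=
      Finset.prod_nonneg (fun i _ => hY.eigenvalues_nonneg i)
    have h1 := one_le_det_one_add hMpsd
    rw [hdetX, hYre]
    simp only [Complex.mul_re, Complex.ofReal_re, Complex.ofReal_im, zero_mul, sub_zero]
    nlinarith [mul_nonneg hYnn (by linarith : (0:ℝ) ≤ (1 + M).det.re - 1)]


/-- Let `A` be Hermitian positive semidefinite with
eigenvalues `lam 1 ≥ … ≥ lam N_t ≥ 0`, and let `U₁` have orthonormal columns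
that are eigenvectors of `A` for the `K` largest eigenvalues.  Then for every
`N_t × K` matrix `P̄` with orthonormal columns,
`det(P̄ᴴ A P̄) ≥ (∏_{i<K} lam i) · det(P̄ᴴ U₁ U₁ᴴ P̄)`, both determinants being
nonnegative reals. -/
theorem det_compression_ge_prod_eigenvalues_mul_alignment
    {Nt K : ℕ} (hKNt : K ≤ Nt)
    (A : Matrix (Fin Nt) (Fin Nt) ℂ) (hA : A.PosSemidef)
    (lam : Fin Nt → ℝ) (hlam_anti : Antitone lam)
    (hlam : ∃ σ : Equiv.Perm (Fin Nt), lam = hA.isHermitian.eigenvalues ∘ σ)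
    (U₁ : Matrix (Fin Nt) (Fin K) ℂ)
    (hU₁orth : U₁ᴴ * U₁ = 1)
    (hU₁eig : A * U₁ = U₁ * Matrix.diagonal (fun i : Fin K => (lam (Fin.castLE hKNt i) : ℂ)))
    (Pbar : Matrix (Fin Nt) (Fin K) ℂ) (hPbar : Pbarᴴ * Pbar = 1) :
    (Pbarᴴ * A * Pbar).det.im = 0 ∧
    (Pbarᴴ * U₁ * U₁ᴴ * Pbar).det.im = 0 ∧
    0 ≤ (Pbarᴴ * U₁ * U₁ᴴ * Pbar).det.re ∧
    (∏ i : Fin K, lam (Fin.castLE hKNt i)) * (Pbarᴴ * U₁ * U₁ᴴ * Pbar).det.re ≤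
      (Pbarᴴ * A * Pbar).det.re := by
  obtain ⟨σ, hσ⟩ := hlam
  have hlam_nonneg : ∀ i, 0 ≤ lam i := fun i => by
    rw [hσ]; exact hA.eigenvalues_nonneg (σ i)
  set D : Matrix (Fin K) (Fin K) ℂ :=
    Matrix.diagonal (fun i : Fin K => (lam (Fin.castLE hKNt i) : ℂ)) with hD
  have hDpsd : D.PosSemidef := by
    refine Matrix.PosSemidef.diagonal (fun i => ?_)
    show (0:ℂ) ≤ _
    exact_mod_cast hlam_nonneg _
  have hDH : Dᴴ = D := hDpsd.isHermitian
  -- conjugate of the eigen-relation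
  have hU1A : U₁ᴴ * A = D * U₁ᴴ := by
    have := congrArg Matrix.conjTranspose hU₁eig
    rwa [conjTranspose_mul, conjTranspose_mul, hA.isHermitian.eq, hDH] at this
  have e1 : U₁ * U₁ᴴ * A = U₁ * D * U₁ᴴ := by
    rw [Matrix.mul_assoc, hU1A, ← Matrix.mul_assoc]
  have e2 : A * (U₁ * U₁ᴴ) = U₁ * D * U₁ᴴ := by rw [← Matrix.mul_assoc, hU₁eig]
  have e4 : U₁ * D * U₁ᴴ * (U₁ * U₁ᴴ) = U₁ * D * U₁ᴴ := by
    rw [Matrix.mul_assoc (U₁ * D), ← Matrix.mul_assoc U₁ᴴ, hU₁orth, Matrix.one_mul]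
  have hQH : ((1 : Matrix (Fin Nt) (Fin Nt) ℂ) - U₁ * U₁ᴴ)ᴴ = 1 - U₁ * U₁ᴴ := by
    rw [conjTranspose_sub, conjTranspose_one, conjTranspose_mul,
      conjTranspose_conjTranspose]
  have hQAQ : ((1 : Matrix (Fin Nt) (Fin Nt) ℂ) - U₁ * U₁ᴴ)ᴴ * A *
      (1 - U₁ * U₁ᴴ) = A - U₁ * D * U₁ᴴ := by
    have expand : ((1 : Matrix (Fin Nt) (Fin Nt) ℂ) - U₁ * U₁ᴴ) * A * (1 - U₁ * U₁ᴴ)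
        = A - U₁ * U₁ᴴ * A - A * (U₁ * U₁ᴴ) + U₁ * U₁ᴴ * A * (U₁ * U₁ᴴ) := by
      noncomm_ring
    rw [hQH, expand, e1, e2, e4]
    abel
  have hS0 : (A - U₁ * D * U₁ᴴ).PosSemidef := by
    rw [← hQAQ]; exact hA.conjTranspose_mul_mul_same _
  set Y : Matrix (Fin K) (Fin K) ℂ := Pbarᴴ * (U₁ * D * U₁ᴴ) * Pbar with hYdef
  have hYpsd : Y.PosSemidef :=
    (hDpsd.mul_mul_conjTranspose_same U₁).conjTranspose_mul_mul_same Pbar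
  have hXpsd : (Pbarᴴ * A * Pbar).PosSemidef := hA.conjTranspose_mul_mul_same Pbar
  have hXY : (Pbarᴴ * A * Pbar - Y).PosSemidef := by
    have : Pbarᴴ * A * Pbar - Y = Pbarᴴ * (A - U₁ * D * U₁ᴴ) * Pbar := by
      rw [hYdef, Matrix.mul_sub, Matrix.sub_mul]
    rw [this]
    exact hS0.conjTranspose_mul_mul_same Pbar
  have hmono := det_re_mono hYpsd hXY
  -- determinant computations
  set b : ℂ := (U₁ᴴ * Pbar).det with hb
  have hBB : Pbarᴴ * U₁ * U₁ᴴ * Pbar = (U₁ᴴ * Pbar)ᴴ * (U₁ᴴ * Pbar) := by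
    rw [conjTranspose_mul, conjTranspose_conjTranspose, ← Matrix.mul_assoc]
  have hBdet : (Pbarᴴ * U₁ * U₁ᴴ * Pbar).det = ((Complex.normSq b : ℝ) : ℂ) := by
    rw [hBB, det_mul, det_conjTranspose, ← hb, RCLike.star_def, mul_comm, Complex.mul_conj]
  have hYfact : Y = (Pbarᴴ * U₁) * D * (U₁ᴴ * Pbar) := by
    rw [hYdef]; simp only [Matrix.mul_assoc]
  have hdc : (Pbarᴴ * U₁).det = star b := by
    rw [hb, ← det_conjTranspose, conjTranspose_mul, conjTranspose_conjTranspose]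
  have hDdet : D.det = ((∏ i : Fin K, lam (Fin.castLE hKNt i) : ℝ) : ℂ) := by
    rw [hD, det_diagonal]
    exact (Complex.ofReal_prod Finset.univ _).symm
  have hYdet : Y.det =
      ((∏ i : Fin K, lam (Fin.castLE hKNt i) : ℝ) : ℂ) * ((Complex.normSq b : ℝ) : ℂ) := by
    have hcb : (starRingEnd ℂ) b * b = ((Complex.normSq b : ℝ) : ℂ) := by
      rw [mul_comm, Complex.mul_conj]
    rw [hYfact, det_mul, det_mul, hdc, hDdet, ← hb, RCLike.star_def]
    linear_combination ((∏ i : Fin K, lam (Fin.castLE hKNt i) : ℝ) : ℂ) * hcb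
  refine ⟨psd_det_im hXpsd, by rw [hBdet]; simp, by rw [hBdet]; simpa using Complex.normSq_nonneg b, ?_⟩
  have hYre : Y.det.re = (∏ i : Fin K, lam (Fin.castLE hKNt i)) * Complex.normSq b := by
    rw [hYdet, ← Complex.ofReal_mul, Complex.ofReal_re]
  rw [hBdet, Complex.ofReal_re]
  calc (∏ i : Fin K, lam (Fin.castLE hKNt i)) * Complex.normSq b
      = Y.det.re := hYre.symm
    _ ≤ _ := hmono
end
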